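/- arXiv:2406.13699 — 4 statements merged into one kernel-verified Lean document; each statement's English description precedes it below -/
import Mathlib

section
/- Let d ≥ 2, let n be a real number with n ≥ d, and let v : ℝ^d → ℝ be a positive C³ function. Set P := (1/v)·((n/2)‖∇v‖² + c_n). Then at every point of ℝ^d one has the identity div( v^(1-n)·( (n/2)∇(‖∇v‖²) - n(Δv)∇v + (n-1)P∇v ) ) = n·v^(1-n)·( |∇²v|² - (Δv)²/n ) + v·(Δv - P)·Δ(v^(1-n)), where |∇²v|² denotes the sum of the squares of all second partial derivatives of v (the squared Frobenius norm of the Hessian) and div denotes the Euclidean divergence. -/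
open MeasureTheory Metric

/-- The Euclidean Laplacian: the trace of the Hessian. -/
noncomputable def lap {d : ℕ} (u : EuclideanSpace ℝ (Fin d) → ℝ)
    (x : EuclideanSpace ℝ (Fin d)) : ℝ :=
  ∑ i, iteratedFDeriv ℝ 2 u x ![EuclideanSpace.single i 1, EuclideanSpace.single i 1]

/-- The Euclidean divergence of a vector field. -/
noncomputable def diverg {d : ℕ} (V : EuclideanSpace ℝ (Fin d) → EuclideanSpace ℝ (Fin d))
    (x : EuclideanSpace ℝ (Fin d)) : ℝ :=
  ∑ i, fderiv ℝ V x (EuclideanSpace.single i 1) i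

/-- The squared Frobenius norm of the Hessian: the sum of the squares of all
second partial derivatives. -/
noncomputable def hessNormSq {d : ℕ} (v : EuclideanSpace ℝ (Fin d) → ℝ)
    (x : EuclideanSpace ℝ (Fin d)) : ℝ :=
  ∑ i, ∑ j,
    (iteratedFDeriv ℝ 2 v x ![EuclideanSpace.single i 1, EuclideanSpace.single j 1]) ^ 2

/-- The constant `c_n`: `2/(n-2)` for `n > 2` and `1/2` for `n = 2`. -/
noncomputable def cExp (n : ℝ) : ℝ := if 2 < n then 2 / (n - 2) else 1 / 2



variable {d : ℕ}

/-- partial derivative in direction `i`. -/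
noncomputable def pd (i : Fin d) (f : EuclideanSpace ℝ (Fin d) → ℝ)
    (x : EuclideanSpace ℝ (Fin d)) : ℝ := fderiv ℝ f x (EuclideanSpace.single i 1)

section API
variable {i : Fin d} {f g : EuclideanSpace ℝ (Fin d) → ℝ} {x : EuclideanSpace ℝ (Fin d)}

theorem pd_add (hf : DifferentiableAt ℝ f x) (hg : DifferentiableAt ℝ g x) :
    pd i (fun y => f y + g y) x = pd i f x + pd i g x := by
  simp [pd, fderiv_fun_add hf hg]

theorem pd_sub (hf : DifferentiableAt ℝ f x) (hg : DifferentiableAt ℝ g x) :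
    pd i (fun y => f y - g y) x = pd i f x - pd i g x := by
  simp [pd, fderiv_fun_sub hf hg]

theorem pd_mul (hf : DifferentiableAt ℝ f x) (hg : DifferentiableAt ℝ g x) :
    pd i (fun y => f y * g y) x = f x * pd i g x + g x * pd i f x := by
  simp [pd, fderiv_fun_mul hf hg]

theorem pd_const_mul (hf : DifferentiableAt ℝ f x) (c : ℝ) :
    pd i (fun y => c * f y) x = c * pd i f x := by
  simp [pd, fderiv_const_mul hf c]

theorem pd_sum {ι : Type*} [Fintype ι] (F : ι → EuclideanSpace ℝ (Fin d) → ℝ)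
    (h : ∀ j, DifferentiableAt ℝ (F j) x) :
    pd i (fun y => ∑ j, F j y) x = ∑ j, pd i (F j) x := by
  simp [pd, fderiv_fun_sum (fun j _ => h j)]

theorem pd_sq (hf : DifferentiableAt ℝ f x) :
    pd i (fun y => f y ^ 2) x = 2 * f x * pd i f x := by
  have : (fun y => f y ^ 2) = fun y => f y * f y := by ext y; ring
  rw [this, pd_mul hf hf]; ring

theorem pd_rpow (hf : DifferentiableAt ℝ f x) (hx : 0 < f x) (p : ℝ) :
    pd i (fun y => f y ^ p) x = p * f x ^ (p - 1) * pd i f x := by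
  have h := (hf.hasFDerivAt.rpow_const (p := p) (Or.inl hx.ne')).fderiv
  simp only [pd, h, ContinuousLinearMap.smul_apply, smul_eq_mul]

theorem grad_apply (f : EuclideanSpace ℝ (Fin d) → ℝ) (x : EuclideanSpace ℝ (Fin d)) (i : Fin d) :
    gradient f x i = pd i f x := by
  have h : (fderiv ℝ f x) (EuclideanSpace.single i (1:ℝ))
      = (inner ℝ (gradient f x) (EuclideanSpace.single i (1:ℝ)) : ℝ) :=
    (InnerProductSpace.toDual_symm_apply).symm
  rw [pd, h, EuclideanSpace.inner_single_right]; simp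

theorem normSq_eq (y : EuclideanSpace ℝ (Fin d)) : ‖y‖ ^ 2 = ∑ i, (y i) ^ 2 := by
  rw [EuclideanSpace.norm_eq, Real.sq_sqrt (by positivity)]
  simp [Real.norm_eq_abs, sq_abs]

theorem pd_pd_eq {f : EuclideanSpace ℝ (Fin d) → ℝ} {x : EuclideanSpace ℝ (Fin d)}
    (hf : DifferentiableAt ℝ (fderiv ℝ f) x) (a b : Fin d) :
    pd a (pd b f) x
      = fderiv ℝ (fderiv ℝ f) x (EuclideanSpace.single a 1) (EuclideanSpace.single b 1) := by
  have h : pd b f = fun y => (fderiv ℝ f y) (EuclideanSpace.single b (1:ℝ)) := rfl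
  rw [pd, h, fderiv_clm_apply hf (differentiableAt_const _)]
  simp

theorem pd_pd_symm {f : EuclideanSpace ℝ (Fin d) → ℝ} {x : EuclideanSpace ℝ (Fin d)}
    (hf : ContDiffAt ℝ 2 f x) (a b : Fin d) :
    pd a (pd b f) x = pd b (pd a f) x := by
  have hdf : DifferentiableAt ℝ (fderiv ℝ f) x :=
    (hf.fderiv_right (m := 1) (by norm_num)).differentiableAt (by norm_num)
  rw [pd_pd_eq hdf, pd_pd_eq hdf, hf.isSymmSndFDerivAt (by norm_num)]

theorem lap_eq {f : EuclideanSpace ℝ (Fin d) → ℝ} {x : EuclideanSpace ℝ (Fin d)}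
    (hf : DifferentiableAt ℝ (fderiv ℝ f) x) :
    lap f x = ∑ i, pd i (pd i f) x := by
  unfold lap
  refine Finset.sum_congr rfl fun i _ => ?_
  rw [iteratedFDeriv_two_apply, pd_pd_eq hf]
  simp

theorem hessNormSq_eq {f : EuclideanSpace ℝ (Fin d) → ℝ} {x : EuclideanSpace ℝ (Fin d)}
    (hf : DifferentiableAt ℝ (fderiv ℝ f) x) :
    hessNormSq f x = ∑ i, ∑ j, (pd i (pd j f) x) ^ 2 := by
  unfold hessNormSq
  refine Finset.sum_congr rfl fun i _ => Finset.sum_congr rfl fun j _ => ?_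
  rw [iteratedFDeriv_two_apply, pd_pd_eq hf]
  simp

theorem diverg_eq {V : EuclideanSpace ℝ (Fin d) → EuclideanSpace ℝ (Fin d)}
    {x : EuclideanSpace ℝ (Fin d)} (hV : DifferentiableAt ℝ V x) :
    diverg V x = ∑ i, pd i (fun y => V y i) x := by
  unfold diverg
  refine Finset.sum_congr rfl fun i _ => ?_
  have h : (fun y => V y i) = fun y => (EuclideanSpace.proj (𝕜 := ℝ) i) (V y) := rfl
  rw [pd, h, show (fun y => (EuclideanSpace.proj (𝕜 := ℝ) i) (V y))
      = (⇑(EuclideanSpace.proj (𝕜 := ℝ) i) ∘ V) from rfl,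
    ((EuclideanSpace.proj (𝕜 := ℝ) i).hasFDerivAt.comp x hV.hasFDerivAt).fderiv]
  rfl


section Middle
variable {d : ℕ} {n : ℝ} {v : EuclideanSpace ℝ (Fin d) → ℝ}

theorem pd_const (i : Fin d) (x : EuclideanSpace ℝ (Fin d)) (c : ℝ) :
    pd i (fun _ => c) x = 0 := by simp [pd]

theorem contDiff_pd (hv : ContDiff ℝ 3 v) (j : Fin d) : ContDiff ℝ 2 (pd j v) := by
  have h := ((ContinuousLinearMap.apply ℝ ℝ
      (EuclideanSpace.single j (1:ℝ))).contDiff (n := 2)).comp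
    (hv.fderiv_right (m := 2) (by norm_num))
  exact h

theorem contDiff_pd' {f : EuclideanSpace ℝ (Fin d) → ℝ} (hf : ContDiff ℝ 2 f) (j : Fin d) :
    ContDiff ℝ 1 (pd j f) := by
  have h := ((ContinuousLinearMap.apply ℝ ℝ
      (EuclideanSpace.single j (1:ℝ))).contDiff (n := 1)).comp
    (hf.fderiv_right (m := 1) (by norm_num))
  exact h

theorem contDiff_pd2 (hv : ContDiff ℝ 3 v) (i j : Fin d) : ContDiff ℝ 1 (pd i (pd j v)) := by
  have h := ((ContinuousLinearMap.apply ℝ ℝ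
      (EuclideanSpace.single i (1:ℝ))).contDiff (n := 1)).comp
    ((contDiff_pd hv j).fderiv_right (m := 1) (by norm_num))
  exact h

theorem pd_symm_fun (hv : ContDiff ℝ 3 v) (a b : Fin d) : pd a (pd b v) = pd b (pd a v) :=
  funext fun x => pd_pd_symm ((hv.of_le (by norm_num)).contDiffAt) a b

theorem third_symm (hv : ContDiff ℝ 3 v) (x : EuclideanSpace ℝ (Fin d)) (i j : Fin d) :
    pd j (pd i (pd i v)) x = pd i (pd i (pd j v)) x := by
  rw [pd_pd_symm (contDiff_pd hv i).contDiffAt j i, pd_symm_fun hv j i]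

end Middle

section Parts
variable {d : ℕ}

noncomputable def Wf (n : ℝ) (v : EuclideanSpace ℝ (Fin d) → ℝ) :
    EuclideanSpace ℝ (Fin d) → ℝ := fun y => v y ^ ((1:ℝ) - n)

noncomputable def Sf (v : EuclideanSpace ℝ (Fin d) → ℝ) :
    EuclideanSpace ℝ (Fin d) → ℝ := fun y => ∑ j, (pd j v y) ^ 2

noncomputable def Bf (n : ℝ) (v : EuclideanSpace ℝ (Fin d) → ℝ) :
    EuclideanSpace ℝ (Fin d) → ℝ := fun y => n / 2 * Sf v y + cExp n

noncomputable def Qf (n : ℝ) (v : EuclideanSpace ℝ (Fin d) → ℝ) :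
    EuclideanSpace ℝ (Fin d) → ℝ := fun y => v y ^ (-n : ℝ) * Bf n v y

noncomputable def Lf (v : EuclideanSpace ℝ (Fin d) → ℝ) :
    EuclideanSpace ℝ (Fin d) → ℝ := fun y => ∑ j, pd j (pd j v) y

noncomputable def Af (v : EuclideanSpace ℝ (Fin d) → ℝ) (i : Fin d) :
    EuclideanSpace ℝ (Fin d) → ℝ := fun y => ∑ j, pd j v y * pd i (pd j v) y

noncomputable def Vif (n : ℝ) (v : EuclideanSpace ℝ (Fin d) → ℝ) (i : Fin d) :
    EuclideanSpace ℝ (Fin d) → ℝ :=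
  fun y => (n * (Wf n v y * Af v i y) - n * (Wf n v y * (Lf v y * pd i v y)))
    + (n - 1) * (Qf n v y * pd i v y)

variable {n : ℝ} {v : EuclideanSpace ℝ (Fin d) → ℝ} (hv : ContDiff ℝ 3 v)
  (hvpos : ∀ x, 0 < v x)

section Diff
include hv

theorem dv (y) : DifferentiableAt ℝ v y := (hv.differentiable (by norm_num)).differentiableAt
theorem dg (j : Fin d) (y) : DifferentiableAt ℝ (pd j v) y :=
  ((contDiff_pd hv j).differentiable (by norm_num)).differentiableAt
theorem dh (i j : Fin d) (y) : DifferentiableAt ℝ (pd i (pd j v)) y :=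
  ((contDiff_pd2 hv i j).differentiable (by norm_num)).differentiableAt
theorem dS (y) : DifferentiableAt ℝ (Sf v) y :=
  DifferentiableAt.fun_sum fun j _ => (dg hv j y).pow 2
theorem dB (y) : DifferentiableAt ℝ (Bf n v) y :=
  ((dS hv y).const_mul _).add_const _
theorem dW (hvpos : ∀ x, 0 < v x) (y) : DifferentiableAt ℝ (Wf n v) y :=
  (dv hv y).rpow_const (Or.inl (hvpos y).ne')
theorem dU1 (hvpos : ∀ x, 0 < v x) (y) : DifferentiableAt ℝ (fun z => v z ^ (-n : ℝ)) y :=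
  (dv hv y).rpow_const (Or.inl (hvpos y).ne')
theorem dQ (hvpos : ∀ x, 0 < v x) (y) : DifferentiableAt ℝ (Qf n v) y :=
  (dU1 hv hvpos y).mul (dB hv y)
theorem dL (y) : DifferentiableAt ℝ (Lf v) y :=
  DifferentiableAt.fun_sum fun j _ => dh hv j j y
theorem dA (i : Fin d) (y) : DifferentiableAt ℝ (Af v i) y :=
  DifferentiableAt.fun_sum fun j _ => (dg hv j y).mul (dh hv i j y)

end Diff
end Parts

section PDs
variable {d : ℕ} {n : ℝ} {v : EuclideanSpace ℝ (Fin d) → ℝ} (hv : ContDiff ℝ 3 v)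
  (hvpos : ∀ x, 0 < v x)
include hv

theorem pdW (i : Fin d) (x) (hvpos : ∀ x, 0 < v x) :
    pd i (Wf n v) x = (1 - n) * v x ^ (-n : ℝ) * pd i v x := by
  unfold Wf
  rw [pd_rpow (dv hv x) (hvpos x), show (1:ℝ) - n - 1 = -n by ring]

theorem pdU1 (i : Fin d) (x) (hvpos : ∀ x, 0 < v x) :
    pd i (fun z => v z ^ (-n : ℝ)) x = -n * v x ^ (-n - 1 : ℝ) * pd i v x := by
  rw [pd_rpow (dv hv x) (hvpos x)]

theorem pdS (i : Fin d) (x) :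
    pd i (Sf v) x = ∑ j, 2 * pd j v x * pd i (pd j v) x := by
  unfold Sf
  rw [pd_sum (F := fun j => fun y => pd j v y ^ 2) (fun j => (dg hv j x).pow 2)]
  exact Finset.sum_congr rfl fun j _ => by rw [pd_sq (dg hv j x)]

theorem pdB (i : Fin d) (x) :
    pd i (Bf n v) x = n / 2 * ∑ j, 2 * pd j v x * pd i (pd j v) x := by
  unfold Bf
  rw [pd_add ((dS hv x).const_mul _) (differentiableAt_const _),
    pd_const_mul (dS hv x), pd_const, pdS hv, add_zero]

theorem pdQ (i : Fin d) (x) (hvpos : ∀ x, 0 < v x) :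
    pd i (Qf n v) x = v x ^ (-n : ℝ) * (n / 2 * ∑ j, 2 * pd j v x * pd i (pd j v) x)
      + Bf n v x * (-n * v x ^ (-n - 1 : ℝ) * pd i v x) := by
  unfold Qf
  rw [pd_mul (dU1 hv hvpos x) (dB hv x), pdU1 hv i x hvpos, pdB hv]

theorem pdL (i : Fin d) (x) :
    pd i (Lf v) x = ∑ j, pd i (pd j (pd j v)) x := by
  unfold Lf
  rw [pd_sum (F := fun j => pd j (pd j v)) (fun j => dh hv j j x)]

theorem pdA (i : Fin d) (x) :
    pd i (Af v i) x
      = ∑ j, (pd i (pd j v) x * pd i (pd j v) x + pd j v x * pd i (pd i (pd j v)) x) := by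
  unfold Af
  rw [pd_sum (F := fun j => fun y => pd j v y * pd i (pd j v) y)
    (fun j => (dg hv j x).mul (dh hv i j x))]
  exact Finset.sum_congr rfl fun j _ => by rw [pd_mul (dg hv j x) (dh hv i j x)]; ring

theorem pdVi (i : Fin d) (x) (hvpos : ∀ x, 0 < v x) :
    pd i (Vif n v i) x =
      (n * Wf n v x) * (∑ j, ((pd i (pd j v) x) ^ 2 + pd j v x * pd i (pd i (pd j v)) x
          - pd i v x * pd i (pd j (pd j v)) x))
      + ((-(n * (1 - n)) * v x ^ (-n : ℝ) * Lf v x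
            - (n - 1) * n * v x ^ (-n - 1 : ℝ) * Bf n v x) * (pd i v x) ^ 2
        + (-(n * Wf n v x) * Lf v x + (n - 1) * v x ^ (-n : ℝ) * Bf n v x)
            * pd i (pd i v) x) := by
  have D1 : DifferentiableAt ℝ (fun y => Wf n v y * Af v i y) x :=
    (dW hv hvpos x).mul (dA hv i x)
  have D2 : DifferentiableAt ℝ (fun y => Lf v y * pd i v y) x := (dL hv x).mul (dg hv i x)
  have D2' : DifferentiableAt ℝ (fun y => Wf n v y * (Lf v y * pd i v y)) x :=
    (dW hv hvpos x).mul D2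
  have D3 : DifferentiableAt ℝ (fun y => Qf n v y * pd i v y) x :=
    (dQ hv hvpos x).mul (dg hv i x)
  unfold Vif
  rw [pd_add ((D1.const_mul n).fun_sub (D2'.const_mul n)) (D3.const_mul (n - 1)),
    pd_sub (D1.const_mul n) (D2'.const_mul n),
    pd_const_mul D1 n, pd_const_mul D2' n, pd_const_mul D3 (n - 1),
    pd_mul (dW hv hvpos x) (dA hv i x),
    pd_mul (dW hv hvpos x) D2,
    pd_mul (dL hv x) (dg hv i x),
    pd_mul (dQ hv hvpos x) (dg hv i x),
    pdW hv i x hvpos, pdA hv, pdL hv, pdQ hv i x hvpos]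
  simp only [Af, Qf]
  have e1 : ∑ j, (pd i (pd j v) x * pd i (pd j v) x + pd j v x * pd i (pd i (pd j v)) x)
      = (∑ j, (pd i (pd j v) x) ^ 2) + ∑ j, pd j v x * pd i (pd i (pd j v)) x := by
    rw [← Finset.sum_add_distrib]
    exact Finset.sum_congr rfl fun j _ => by ring
  have e2 : ∑ j, 2 * pd j v x * pd i (pd j v) x
      = 2 * ∑ j, pd j v x * pd i (pd j v) x := by
    rw [Finset.mul_sum]
    exact Finset.sum_congr rfl fun j _ => by ring
  have e3 : ∑ j, ((pd i (pd j v) x) ^ 2 + pd j v x * pd i (pd i (pd j v)) x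
        - pd i v x * pd i (pd j (pd j v)) x)
      = ((∑ j, (pd i (pd j v) x) ^ 2) + ∑ j, pd j v x * pd i (pd i (pd j v)) x)
        - pd i v x * ∑ j, pd i (pd j (pd j v)) x := by
    rw [Finset.sum_sub_distrib, Finset.sum_add_distrib, Finset.mul_sum]
  rw [e1, e2, e3]
  ring

end PDs


/-- Lemma 2.1, Euclidean case: the fundamental divergence identity for the P-function. -/
theorem stmt_6 (d : ℕ) (hd : 2 ≤ d) (n : ℝ) (hn : (d : ℝ) ≤ n)
    (v : EuclideanSpace ℝ (Fin d) → ℝ) (hv : ContDiff ℝ 3 v) (hvpos : ∀ x, 0 < v x)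
    (P : EuclideanSpace ℝ (Fin d) → ℝ)
    (hP : ∀ x, P x = (1 / v x) * ((n / 2) * ‖gradient v x‖ ^ 2 + cExp n)) :
    ∀ x,
      diverg (fun y => (v y) ^ ((1 : ℝ) - n) •
          ((n / 2) • gradient (fun z => ‖gradient v z‖ ^ 2) y
            - (n * lap v y) • gradient v y + ((n - 1) * P y) • gradient v y)) x
      = n * (v x) ^ ((1 : ℝ) - n) * (hessNormSq v x - (lap v x) ^ 2 / n)
        + v x * (lap v x - P x) * lap (fun y => (v y) ^ ((1 : ℝ) - n)) x := by
  intro x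
  have ha : v x ≠ 0 := (hvpos x).ne'
  have hdfv : ∀ y, DifferentiableAt ℝ (fderiv ℝ v) y := fun y =>
    ((hv.fderiv_right (m := 2) (by norm_num)).differentiable (by norm_num)).differentiableAt
  -- function-level rewrites
  have hns : (fun z => ‖gradient v z‖ ^ 2) = Sf v := funext fun z => by
    rw [normSq_eq]
    exact Finset.sum_congr rfl fun j _ => by rw [grad_apply]
  have hlapfun : lap v = Lf v := funext fun y => lap_eq (hdfv y)
  have hWfid : (fun y => v y ^ ((1 : ℝ) - n)) = Wf n v := rfl
  have hPfun : P = fun y => v y ^ (-1 : ℝ) * Bf n v y := funext fun y => by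
    rw [hP y, congrFun hns y, one_div, ← Real.rpow_neg_one]
    rfl
  rw [hns, hlapfun, hWfid, hPfun]
  -- gradient as sum of coordinates
  have hgradsum : ∀ (f : EuclideanSpace ℝ (Fin d) → ℝ) (y),
      gradient f y = ∑ j, pd j f y • EuclideanSpace.single j (1 : ℝ) := by
    intro f y
    ext i
    rw [grad_apply]
    have hs : (∑ j, pd j f y • EuclideanSpace.single j (1:ℝ)) i
        = ∑ j, (pd j f y • EuclideanSpace.single j (1:ℝ)) i := by rw [WithLp.ofLp_sum]; exact Finset.sum_apply i _ _
    rw [hs]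
    simp [EuclideanSpace.single_apply]
  have hgvd : ∀ y, DifferentiableAt ℝ (fun z => gradient v z) y := by
    intro y
    rw [show (fun z => gradient v z) = fun z => ∑ j, pd j v z • EuclideanSpace.single j (1:ℝ)
      from funext fun z => hgradsum v z]
    exact DifferentiableAt.fun_sum fun j _ => (dg hv j y).smul_const _
  have hGSf : ∀ y, DifferentiableAt ℝ (fun z => gradient (Sf v) z) y := by
    intro y
    rw [show (fun z => gradient (Sf v) z)
        = fun z => ∑ j, pd j (Sf v) z • EuclideanSpace.single j (1:ℝ)
      from funext fun z => hgradsum (Sf v) z]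
    have hSf2 : ContDiff ℝ 2 (Sf v) := ContDiff.sum fun j _ => (contDiff_pd hv j).pow 2
    exact DifferentiableAt.fun_sum fun j _ =>
      (((contDiff_pd' hSf2 j).differentiable (by norm_num)).differentiableAt).smul_const _
  -- differentiability of the vector field
  have hVd : DifferentiableAt ℝ (fun y => v y ^ ((1 : ℝ) - n) •
      ((n / 2) • gradient (Sf v) y - (n * Lf v y) • gradient v y
        + ((n - 1) * (v y ^ (-1 : ℝ) * Bf n v y)) • gradient v y)) x := by
    apply DifferentiableAt.smul ((dv hv x).rpow_const (Or.inl ha))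
    apply DifferentiableAt.add
    · apply DifferentiableAt.sub
      · exact (hGSf x).fun_const_smul _
      · exact ((dL hv x).const_mul n).smul (hgvd x)
    · exact ((((dv hv x).rpow_const (Or.inl ha)).mul (dB hv x)).const_mul _).smul (hgvd x)
  rw [diverg_eq hVd]
  -- componentwise identification with Vif
  have hfun : ∀ i : Fin d, (fun y => (v y ^ ((1 : ℝ) - n) •
      ((n / 2) • gradient (Sf v) y - (n * Lf v y) • gradient v y
        + ((n - 1) * (v y ^ (-1 : ℝ) * Bf n v y)) • gradient v y)) i) = Vif n v i := by
    intro i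
    funext y
    simp only [PiLp.smul_apply, PiLp.add_apply, PiLp.sub_apply, smul_eq_mul]
    rw [grad_apply, grad_apply, pdS hv i y]
    have hr : v y ^ ((1 : ℝ) - n) * v y ^ (-1 : ℝ) = v y ^ (-n : ℝ) := by
      rw [← Real.rpow_add (hvpos y), show (1 : ℝ) - n + -1 = -n by ring]
    have e2 : ∑ j, 2 * pd j v y * pd i (pd j v) y
        = 2 * ∑ j, pd j v y * pd i (pd j v) y := by
      rw [Finset.mul_sum]
      exact Finset.sum_congr rfl fun j _ => by ring
    rw [e2]
    unfold Vif Wf Qf Af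
    linear_combination ((n - 1) * Bf n v y * pd i v y) * hr
  have hsum1 : ∑ i, pd i (fun y => (v y ^ ((1 : ℝ) - n) •
      ((n / 2) • gradient (Sf v) y - (n * Lf v y) • gradient v y
        + ((n - 1) * (v y ^ (-1 : ℝ) * Bf n v y)) • gradient v y)) i) x
      = ∑ i, pd i (Vif n v i) x :=
    Finset.sum_congr rfl fun i _ => by rw [hfun i]
  rw [hsum1, Finset.sum_congr rfl fun i (_ : i ∈ Finset.univ) => pdVi hv i x hvpos]
  -- cancellation of third derivatives
  have hcancel : ∑ i, ∑ j, ((pd i (pd j v) x) ^ 2 + pd j v x * pd i (pd i (pd j v)) x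
        - pd i v x * pd i (pd j (pd j v)) x)
      = ∑ i : Fin d, ∑ j : Fin d, (pd i (pd j v) x) ^ 2 := by
    have h1 : ∀ i : Fin d, ∑ j, ((pd i (pd j v) x) ^ 2 + pd j v x * pd i (pd i (pd j v)) x
          - pd i v x * pd i (pd j (pd j v)) x)
        = ((∑ j, (pd i (pd j v) x) ^ 2) + ∑ j, pd j v x * pd i (pd i (pd j v)) x)
          - ∑ j, pd i v x * pd i (pd j (pd j v)) x := fun i => by
      rw [Finset.sum_sub_distrib, Finset.sum_add_distrib]
    rw [Finset.sum_congr rfl fun i (_ : i ∈ Finset.univ) => h1 i,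
      Finset.sum_sub_distrib, Finset.sum_add_distrib]
    have h2 : ∑ i : Fin d, ∑ j : Fin d, pd i v x * pd i (pd j (pd j v)) x
        = ∑ i : Fin d, ∑ j : Fin d, pd j v x * pd i (pd i (pd j v)) x := by
      rw [Finset.sum_comm]
      exact Finset.sum_congr rfl fun a _ => Finset.sum_congr rfl fun b _ => by
        rw [third_symm hv x a b]
    rw [h2]
    ring
  rw [Finset.sum_add_distrib, ← Finset.mul_sum, hcancel, Finset.sum_add_distrib,
    ← Finset.mul_sum, ← Finset.mul_sum]
  -- second Laplacian
  have hlapW : lap (Wf n v) x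
      = (1 - n) * v x ^ (-n : ℝ) * (∑ i, pd i (pd i v) x)
        - n * (1 - n) * v x ^ (-n - 1 : ℝ) * (∑ i, (pd i v x) ^ 2) := by
    have hv2 : ContDiffAt ℝ 2 v x := hv.contDiffAt.of_le (by norm_num)
    have hW2 : ContDiffAt ℝ 2 (Wf n v) x := hv2.rpow_const_of_ne ha
    have hdW2 : DifferentiableAt ℝ (fderiv ℝ (Wf n v)) x :=
      (hW2.fderiv_right (m := 1) (by norm_num)).differentiableAt (by norm_num)
    rw [lap_eq hdW2]
    have hpdWfun : ∀ i : Fin d, pd i (Wf n v)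
        = fun y => (1 - n) * (v y ^ (-n : ℝ) * pd i v y) :=
      fun i => funext fun y => by rw [pdW hv i y hvpos]; ring
    calc ∑ i, pd i (pd i (Wf n v)) x
        = ∑ i, ((1 - n) * (v x ^ (-n : ℝ) * pd i (pd i v) x
            + pd i v x * (-n * v x ^ (-n - 1 : ℝ) * pd i v x))) :=
          Finset.sum_congr rfl fun i _ => by
            rw [hpdWfun i, pd_const_mul ((dU1 hv hvpos x).fun_mul (dg hv i x)) _,
              pd_mul (dU1 hv hvpos x) (dg hv i x), pdU1 hv i x hvpos]
      _ = ∑ i, (((1 - n) * v x ^ (-n : ℝ)) * pd i (pd i v) x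
            - ((n * (1 - n)) * v x ^ (-n - 1 : ℝ)) * (pd i v x) ^ 2) :=
          Finset.sum_congr rfl fun i _ => by ring
      _ = _ := by
          rw [Finset.sum_sub_distrib, ← Finset.mul_sum, ← Finset.mul_sum]
  rw [show ((fun y => v y ^ (-1 : ℝ) * Bf n v y) x) = v x ^ (-1 : ℝ) * Bf n v x from rfl,
    hessNormSq_eq (hdfv x), hlapW]
  simp only [Wf, Bf, Sf, Lf]
  -- rpow relations and final algebra
  have r1 : v x ^ ((1 : ℝ) - n) = v x * v x ^ (-n : ℝ) := by
    rw [show (1 : ℝ) - n = 1 + -n by ring, Real.rpow_add (hvpos x), Real.rpow_one]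
  have r2 : v x ^ (-n : ℝ) = v x * v x ^ (-n - 1 : ℝ) := by
    conv_lhs => rw [show (-n : ℝ) = 1 + (-n - 1) by ring]
    rw [Real.rpow_add (hvpos x), Real.rpow_one]
  have r3 : v x * v x ^ (-1 : ℝ) = 1 := by
    rw [Real.rpow_neg_one]; exact mul_inv_cancel₀ ha
  have hnpos : (0 : ℝ) < n :=
    lt_of_lt_of_le (by exact_mod_cast Nat.pos_of_ne_zero (by omega)) hn
  have rn : n * n⁻¹ = 1 := mul_inv_cancel₀ hnpos.ne' 
  linear_combination
    ((n / 2 * (∑ i, (pd i v x) ^ 2) + cExp n)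
        * ((1 - n) * v x ^ (-n : ℝ) * (∑ i, pd i (pd i v) x)
          - n * (1 - n) * v x ^ (-n - 1 : ℝ) * (∑ i, (pd i v x) ^ 2))) * r3
    + ((1 - n) * (∑ i, pd i (pd i v) x) ^ 2) * r1
    - (n * (1 - n) * (∑ i, pd i (pd i v) x) * (∑ i, (pd i v x) ^ 2)) * r2
    + (v x ^ ((1 : ℝ) - n) * (∑ i, pd i (pd i v) x) ^ 2) * rn
end API
end

section
/- Let d ≥ 2, let n be a real number with n ≥ d, and let v : ℝ^d → ℝ be a positive C³ function which satisfies Δv = P at every point, where P := (1/v)·((n/2)‖∇v‖² + c_n). Then at every point of ℝ^d one has div( v^(2-n)·∇P ) = n·v^(1-n)·( |∇²v|² - (Δv)²/n ), where |∇²v|² denotes the squared Frobenius norm of the Hessian of v and div denotes the Euclidean divergence. -/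
open MeasureTheory Metric

open EuclideanSpace

noncomputable def pdv {d : ℕ} (u : EuclideanSpace ℝ (Fin d) → ℝ) (i : Fin d)
    (x : EuclideanSpace ℝ (Fin d)) : ℝ := fderiv ℝ u x (EuclideanSpace.single i 1)

variable {d : ℕ} {u P : EuclideanSpace ℝ (Fin d) → ℝ} {x : EuclideanSpace ℝ (Fin d)}

lemma contDiff_pdv {m : ℕ} (hu : ContDiff ℝ (m + 1 : ℕ) u) (i : Fin d) :
    ContDiff ℝ (m : ℕ) (pdv u i) := by
  have h : ContDiff ℝ (m : ℕ) (fderiv ℝ u) := hu.fderiv_right (by exact_mod_cast le_rfl)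
  exact h.clm_apply contDiff_const

lemma fderiv_pdv_apply (hu : DifferentiableAt ℝ (fderiv ℝ u) x) (i : Fin d)
    (w : EuclideanSpace ℝ (Fin d)) :
    fderiv ℝ (pdv u i) x w = fderiv ℝ (fderiv ℝ u) x w (EuclideanSpace.single i 1) := by
  have h : fderiv ℝ (fun y => (fderiv ℝ u y) ((fun _ => EuclideanSpace.single i (1:ℝ)) y)) x
      = (fderiv ℝ u x).comp (fderiv ℝ (fun _ => EuclideanSpace.single i (1:ℝ)) x)
        + (fderiv ℝ (fderiv ℝ u) x).flip (EuclideanSpace.single i 1) :=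
    fderiv_clm_apply hu (differentiableAt_const _)
  have h2 : fderiv ℝ (pdv u i) x = (fderiv ℝ (fderiv ℝ u) x).flip (EuclideanSpace.single i 1) := by
    unfold pdv; rw [h]; simp
  rw [h2]; rfl

lemma pdv_symm (hu : ContDiff ℝ 2 u) (i j : Fin d) (x) :
    pdv (pdv u i) j x = pdv (pdv u j) i x := by
  have hd : DifferentiableAt ℝ (fderiv ℝ u) x :=
    ((hu.fderiv_right (m := 1) (by norm_num)).differentiable (by norm_num)) x
  have hs : IsSymmSndFDerivAt ℝ u x :=
    (hu.contDiffAt).isSymmSndFDerivAt (by norm_num)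
  show fderiv ℝ (pdv u i) x (single j 1) = fderiv ℝ (pdv u j) x (single i 1)
  rw [fderiv_pdv_apply hd, fderiv_pdv_apply hd, hs]

lemma grad_coord (u : EuclideanSpace ℝ (Fin d) → ℝ) (x) (i : Fin d) :
    gradient u x i = pdv u i x := by
  have h1 : inner ℝ (gradient u x) (EuclideanSpace.single i (1:ℝ)) = pdv u i x := by
    rw [gradient, InnerProductSpace.toDual_symm_apply]; rfl
  rw [← h1, EuclideanSpace.inner_single_right]; simp

lemma lap_eq_s7 (hu : DifferentiableAt ℝ (fderiv ℝ u) x) :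
    lap u x = ∑ i, pdv (pdv u i) i x := by
  unfold lap
  refine Finset.sum_congr rfl fun i _ => ?_
  rw [iteratedFDeriv_two_apply]
  simp only [Matrix.cons_val_zero, Matrix.cons_val_one, Matrix.head_cons]
  rw [show pdv (pdv u i) i x = fderiv ℝ (pdv u i) x (single i 1) from rfl,
    fderiv_pdv_apply hu]

lemma hess_eq (hu : DifferentiableAt ℝ (fderiv ℝ u) x) :
    hessNormSq u x = ∑ i, ∑ j, (pdv (pdv u j) i x) ^ 2 := by
  unfold hessNormSq
  refine Finset.sum_congr rfl fun i _ => Finset.sum_congr rfl fun j _ => ?_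
  rw [iteratedFDeriv_two_apply]
  simp only [Matrix.cons_val_zero, Matrix.cons_val_one, Matrix.head_cons]
  rw [show pdv (pdv u j) i x = fderiv ℝ (pdv u j) x (single i 1) from rfl,
    fderiv_pdv_apply hu]


lemma sum_piLp_apply {d : ℕ} {ι : Type*} (s : Finset ι)
    (f : ι → EuclideanSpace ℝ (Fin d)) (m : Fin d) :
    (∑ k ∈ s, f k) m = ∑ k ∈ s, f k m :=
  map_sum (EuclideanSpace.proj (𝕜 := ℝ) m) f s

/-- Lemma 2.2, Euclidean case: if `Δv = P` then `div(v^(2-n) ∇P) = n v^(1-n) (|∇²v|² - (Δv)²/n)`. -/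
theorem stmt_7 (d : ℕ) (hd : 2 ≤ d) (n : ℝ) (hn : (d : ℝ) ≤ n)
    (v : EuclideanSpace ℝ (Fin d) → ℝ) (hv : ContDiff ℝ 3 v) (hvpos : ∀ x, 0 < v x)
    (P : EuclideanSpace ℝ (Fin d) → ℝ)
    (hP : ∀ x, P x = (1 / v x) * ((n / 2) * ‖gradient v x‖ ^ 2 + cExp n))
    (heq : ∀ x, lap v x = P x) :
    ∀ x,
      diverg (fun y => (v y) ^ ((2 : ℝ) - n) • gradient P y) x
      = n * (v x) ^ ((1 : ℝ) - n) * (hessNormSq v x - (lap v x) ^ 2 / n) := by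
  classical
  -- basic regularity
  have hv2 : ContDiff ℝ 2 v := hv.of_le (by norm_num)
  have dv : Differentiable ℝ v := hv.differentiable (by norm_num)
  have hF : ∀ j, ContDiff ℝ 2 (pdv v j) := fun j =>
    contDiff_pdv (m := 2) (by exact_mod_cast hv) j
  have dF : ∀ j, Differentiable ℝ (pdv v j) := fun j => (hF j).differentiable (by norm_num)
  have dfv : Differentiable ℝ (fderiv ℝ v) :=
    (hv.fderiv_right (m := 2) (by norm_num)).differentiable (by norm_num)
  have dpp : ∀ j k, Differentiable ℝ (pdv (pdv v j) k) := fun j k =>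
    (contDiff_pdv (m := 1) (by exact_mod_cast hF j) k).differentiable (by norm_num)
  -- P rewritten
  have hnorm : ∀ y, ‖gradient v y‖ ^ 2 = ∑ j, (pdv v j y) ^ 2 := by
    intro y
    rw [← real_inner_self_eq_norm_sq]
    rw [show (inner ℝ (gradient v y) (gradient v y) : ℝ) = ∑ j, gradient v y j * gradient v y j
      from rfl]
    exact Finset.sum_congr rfl fun j _ => by rw [grad_coord]; ring
  have hPQ : P = fun y => (v y)⁻¹ * ((n / 2) * (∑ j, (pdv v j y) ^ 2) + cExp n) :=
    funext fun y => by rw [hP y, hnorm y, one_div]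
  have hPcd : ContDiff ℝ 2 P := by
    rw [hPQ]
    exact (hv2.inv fun y => (hvpos y).ne').mul
      ((contDiff_const.mul (ContDiff.sum fun j _ => (hF j).pow 2)).add contDiff_const)
  have dP : Differentiable ℝ P := hPcd.differentiable (by norm_num)
  have dpdP : ∀ i, Differentiable ℝ (pdv P i) := fun i =>
    (contDiff_pdv (m := 1) (by exact_mod_cast hPcd) i).differentiable (by norm_num)
  -- first differentiation of P*v = (n/2)|∇v|² + c
  have e1 : ∀ (y : EuclideanSpace ℝ (Fin d)) (i : Fin d),
      pdv P i y * v y + P y * pdv v i y = n * ∑ j, pdv v j y * pdv (pdv v j) i y := by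
    intro y i
    have hfun : (fun z => P z * v z)
        = fun z => (n / 2) * (∑ j, pdv v j z * pdv v j z) + cExp n := by
      funext z
      have hz : v z ≠ 0 := (hvpos z).ne'
      rw [hPQ]
      simp only [← sq]
      field_simp
    have h1 : HasFDerivAt (fun z => P z * v z)
        (P y • fderiv ℝ v y + v y • fderiv ℝ P y) y :=
      (dP y).hasFDerivAt.mul (dv y).hasFDerivAt
    have h2 : HasFDerivAt (fun z => (n / 2) * (∑ j, pdv v j z * pdv v j z) + cExp n)
        ((n / 2) • (∑ j, (pdv v j y • fderiv ℝ (pdv v j) y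
          + pdv v j y • fderiv ℝ (pdv v j) y))) y := by
      have := (HasFDerivAt.fun_sum (u := Finset.univ)
        (fun j (_ : j ∈ Finset.univ) =>
          ((dF j y).hasFDerivAt.mul (dF j y).hasFDerivAt))).const_mul (n / 2)
      exact this.add_const _
    have h3 := (hfun ▸ h1).unique h2
    have h4 := DFunLike.congr_fun h3 (EuclideanSpace.single i (1 : ℝ))
    simp only [ContinuousLinearMap.add_apply, ContinuousLinearMap.smul_apply,
      ContinuousLinearMap.coe_sum', Finset.sum_apply, smul_eq_mul, pow_one,
      Nat.cast_ofNat] at h4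
    have hL : fderiv ℝ v y (EuclideanSpace.single i 1) = pdv v i y := rfl
    have hLP : fderiv ℝ P y (EuclideanSpace.single i 1) = pdv P i y := rfl
    rw [hL, hLP] at h4
    have hR : ∀ j : Fin d, fderiv ℝ (pdv v j) y (EuclideanSpace.single i 1)
        = pdv (pdv v j) i y := fun j => rfl
    simp only [hR] at h4
    calc pdv P i y * v y + P y * pdv v i y
        = P y * pdv v i y + v y * pdv P i y := by ring
      _ = n / 2 * ∑ j, (pdv v j y * pdv (pdv v j) i y + pdv v j y * pdv (pdv v j) i y) := h4
      _ = n * ∑ j, pdv v j y * pdv (pdv v j) i y := by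
          rw [Finset.mul_sum, Finset.mul_sum]
          exact Finset.sum_congr rfl fun j _ => by ring
  intro x
  -- second differentiation
  have e2 : ∀ i : Fin d,
      pdv (pdv P i) i x * v x + pdv P i x * pdv v i x + pdv v i x * pdv P i x
        + P x * pdv (pdv v i) i x
      = n * ∑ j, (pdv v j x * pdv (pdv (pdv v j) i) i x
          + pdv (pdv v j) i x * pdv (pdv v j) i x) := by
    intro i
    have hAB : (fun z => pdv P i z * v z + P z * pdv v i z)
        = fun z => n * ∑ j, pdv v j z * pdv (pdv v j) i z := funext fun z => e1 z i
    have hA : HasFDerivAt (fun z => pdv P i z * v z + P z * pdv v i z)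
        ((pdv P i x • fderiv ℝ v x + v x • fderiv ℝ (pdv P i) x)
          + (P x • fderiv ℝ (pdv v i) x + pdv v i x • fderiv ℝ P x)) x :=
      ((dpdP i x).hasFDerivAt.mul (dv x).hasFDerivAt).add
        ((dP x).hasFDerivAt.mul ((dF i) x).hasFDerivAt)
    have hB : HasFDerivAt (fun z => n * ∑ j, pdv v j z * pdv (pdv v j) i z)
        (n • ∑ j, (pdv v j x • fderiv ℝ (pdv (pdv v j) i) x
          + pdv (pdv v j) i x • fderiv ℝ (pdv v j) x)) x :=
      (HasFDerivAt.fun_sum (u := Finset.univ) (fun j (_ : j ∈ Finset.univ) =>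
        ((dF j x).hasFDerivAt.mul ((dpp j i) x).hasFDerivAt))).const_mul n
    have h3 := (hAB ▸ hA).unique hB
    have h4 := DFunLike.congr_fun h3 (EuclideanSpace.single i (1 : ℝ))
    simp only [ContinuousLinearMap.add_apply, ContinuousLinearMap.smul_apply,
      ContinuousLinearMap.coe_sum', Finset.sum_apply, smul_eq_mul] at h4
    have r1 : fderiv ℝ v x (EuclideanSpace.single i 1) = pdv v i x := rfl
    have r2 : fderiv ℝ P x (EuclideanSpace.single i 1) = pdv P i x := rfl
    have r3 : fderiv ℝ (pdv P i) x (EuclideanSpace.single i 1) = pdv (pdv P i) i x := rfl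
    have r4 : fderiv ℝ (pdv v i) x (EuclideanSpace.single i 1) = pdv (pdv v i) i x := rfl
    have r5 : ∀ j : Fin d, fderiv ℝ (pdv (pdv v j) i) x (EuclideanSpace.single i 1)
        = pdv (pdv (pdv v j) i) i x := fun j => rfl
    have r6 : ∀ j : Fin d, fderiv ℝ (pdv v j) x (EuclideanSpace.single i 1)
        = pdv (pdv v j) i x := fun j => rfl
    rw [r1, r2, r3, r4] at h4
    simp only [r5, r6] at h4
    calc pdv (pdv P i) i x * v x + pdv P i x * pdv v i x + pdv v i x * pdv P i x
          + P x * pdv (pdv v i) i x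
        = pdv P i x * pdv v i x + v x * pdv (pdv P i) i x
          + (P x * pdv (pdv v i) i x + pdv v i x * pdv P i x) := by ring
      _ = n * ∑ j, (pdv v j x * pdv (pdv (pdv v j) i) i x
            + pdv (pdv v j) i x * pdv (pdv v j) i x) := h4
  -- commuting derivatives: Δ(∂_j v) = ∂_j P
  have e3 : ∀ j : Fin d, ∑ i, pdv (pdv (pdv v j) i) i x = pdv P j x := by
    intro j
    have hstep : ∀ i : Fin d, pdv (pdv (pdv v j) i) i x = pdv (pdv (pdv v i) i) j x := by
      intro i
      have h1 : pdv (pdv v j) i = pdv (pdv v i) j := funext fun y => pdv_symm hv2 j i y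
      rw [h1]
      exact pdv_symm (hF i) j i x
    rw [Finset.sum_congr rfl fun i _ => hstep i]
    have hlapP : (fun y => ∑ i, pdv (pdv v i) i y) = P := by
      funext y
      rw [← lap_eq_s7 (dfv y)]
      exact heq y
    have hsum : ∑ i, pdv (pdv (pdv v i) i) j x
        = pdv (fun y => ∑ i, pdv (pdv v i) i y) j x := by
      have : ∑ i : Fin d, pdv (pdv (pdv v i) i) j x
          = (∑ i : Fin d, fderiv ℝ (pdv (pdv v i) i) x) (EuclideanSpace.single j 1) := by
        rw [ContinuousLinearMap.sum_apply]
        rfl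
      rw [this, ← fderiv_fun_sum (fun i _ => (dpp i i x))]
      rfl
    rw [hsum, hlapP]
  have hlap : (∑ i, pdv (pdv v i) i x) = P x := by
    rw [← lap_eq_s7 (dfv x)]; exact heq x
  set DP := ∑ i, pdv (pdv P i) i x with hDP
  set S := ∑ i, pdv P i x * pdv v i x with hS
  set H := ∑ i, ∑ j, (pdv (pdv v j) i x) ^ 2 with hH
  have key : DP * v x = n * H + (n - 2) * S - P x ^ 2 := by
    have hA : ∑ i, pdv (pdv P i) i x * v x = DP * v x := (Finset.sum_mul _ _ _).symm
    have hC : ∑ i, pdv v i x * pdv P i x = S := by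
      rw [hS]; exact Finset.sum_congr rfl fun i _ => mul_comm _ _
    have hD : ∑ i, P x * pdv (pdv v i) i x = P x ^ 2 := by
      rw [← Finset.mul_sum, hlap, sq]
    have hLsum : ∑ i, (pdv (pdv P i) i x * v x + pdv P i x * pdv v i x
        + pdv v i x * pdv P i x + P x * pdv (pdv v i) i x)
        = DP * v x + S + S + P x ^ 2 := by
      rw [Finset.sum_add_distrib, Finset.sum_add_distrib, Finset.sum_add_distrib,
        hA, hC, hD, ← hS]
    have hRsum : ∑ i, (n * ∑ j, (pdv v j x * pdv (pdv (pdv v j) i) i x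
          + pdv (pdv v j) i x * pdv (pdv v j) i x))
        = n * S + n * H := by
      have step1 : ∑ i, (n * ∑ j, (pdv v j x * pdv (pdv (pdv v j) i) i x
            + pdv (pdv v j) i x * pdv (pdv v j) i x))
          = n * ∑ j, ∑ i, (pdv v j x * pdv (pdv (pdv v j) i) i x
            + pdv (pdv v j) i x * pdv (pdv v j) i x) := by
        rw [← Finset.mul_sum, Finset.sum_comm]
      rw [step1]
      have step2 : ∀ j : Fin d, ∑ i, (pdv v j x * pdv (pdv (pdv v j) i) i x
            + pdv (pdv v j) i x * pdv (pdv v j) i x)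
          = pdv v j x * pdv P j x + ∑ i, (pdv (pdv v j) i x) ^ 2 := by
        intro j
        rw [Finset.sum_add_distrib, ← Finset.mul_sum, e3 j]
        congr 1
        exact Finset.sum_congr rfl fun i _ => (sq _).symm
      rw [Finset.sum_congr rfl fun j _ => step2 j, Finset.sum_add_distrib, mul_add]
      have hSS : ∑ j, pdv v j x * pdv P j x = S := by
        rw [hS]; exact Finset.sum_congr rfl fun j _ => mul_comm _ _
      have hHH : ∑ j : Fin d, ∑ i : Fin d, (pdv (pdv v j) i x) ^ 2 = H := by
        rw [hH]; exact Finset.sum_comm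
      rw [hSS, hHH]
    have h := Finset.sum_congr rfl (fun i (_ : i ∈ Finset.univ) => e2 i)
    rw [hLsum, hRsum] at h
    linarith [h]
  -- compute the divergence
  have hdiv : diverg (fun y => (v y) ^ ((2 : ℝ) - n) • gradient P y) x
      = v x ^ ((2 : ℝ) - n) * DP + (2 - n) * v x ^ ((1 : ℝ) - n) * S := by
    have hdecomp : (fun y => (v y) ^ ((2:ℝ) - n) • gradient P y)
        = fun y => ∑ k, ((v y) ^ ((2:ℝ) - n) * pdv P k y) • EuclideanSpace.single k (1:ℝ) := by
      funext y
      ext m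
      simp only [PiLp.smul_apply, smul_eq_mul, sum_piLp_apply,
        EuclideanSpace.single_apply, mul_ite, mul_one, mul_zero, Finset.sum_ite_eq,
        Finset.mem_univ, if_true]
      rw [grad_coord]
    have hrpow : HasFDerivAt (fun y => v y ^ ((2:ℝ) - n))
        (((2 - n) * v x ^ ((2:ℝ) - n - 1)) • fderiv ℝ v x) x :=
      (dv x).hasFDerivAt.rpow_const (Or.inl (hvpos x).ne')
    have hW : ∀ k : Fin d, HasFDerivAt (fun y => (v y) ^ ((2:ℝ) - n) * pdv P k y)
        ((v x ^ ((2:ℝ) - n)) • fderiv ℝ (pdv P k) x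
          + (pdv P k x) • (((2 - n) * v x ^ ((2:ℝ) - n - 1)) • fderiv ℝ v x)) x :=
      fun k => hrpow.mul ((dpdP k x).hasFDerivAt)
    have hV : HasFDerivAt
        (fun y => ∑ k, ((v y) ^ ((2:ℝ) - n) * pdv P k y) • EuclideanSpace.single k (1:ℝ))
        (∑ k, ((v x ^ ((2:ℝ) - n)) • fderiv ℝ (pdv P k) x
          + (pdv P k x) • (((2 - n) * v x ^ ((2:ℝ) - n - 1)) • fderiv ℝ v x)).smulRight
            (EuclideanSpace.single k (1:ℝ))) x :=
      HasFDerivAt.fun_sum fun k _ => (hW k).smul_const _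
    unfold diverg
    rw [hdecomp, hV.fderiv]
    simp only [ContinuousLinearMap.sum_apply, ContinuousLinearMap.smulRight_apply,
      ContinuousLinearMap.add_apply, ContinuousLinearMap.smul_apply, smul_eq_mul,
      sum_piLp_apply, PiLp.smul_apply, EuclideanSpace.single_apply, mul_ite, mul_one,
      mul_zero, Finset.sum_ite_eq, Finset.mem_univ, if_true]
    have hterm : ∀ i : Fin d,
        (v x ^ ((2:ℝ) - n) * fderiv ℝ (pdv P i) x (EuclideanSpace.single i 1)
          + pdv P i x * ((2 - n) * v x ^ ((2:ℝ) - n - 1)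
            * fderiv ℝ v x (EuclideanSpace.single i 1)))
        = v x ^ ((2:ℝ) - n) * pdv (pdv P i) i x
          + (2 - n) * v x ^ ((1:ℝ) - n) * (pdv P i x * pdv v i x) := by
      intro i
      have hexp : v x ^ ((2:ℝ) - n - 1) = v x ^ ((1:ℝ) - n) := by
        rw [show (2:ℝ) - n - 1 = 1 - n from by ring]
      rw [show fderiv ℝ (pdv P i) x (EuclideanSpace.single i 1) = pdv (pdv P i) i x from rfl,
        show fderiv ℝ v x (EuclideanSpace.single i 1) = pdv v i x from rfl, hexp]
      ring
    rw [Finset.sum_congr rfl fun i _ => hterm i, Finset.sum_add_distrib,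
      ← Finset.mul_sum, ← Finset.mul_sum, ← hDP, ← hS]
  -- final algebra
  have hn0 : (0 : ℝ) < n := by
    have h2 : (2 : ℝ) ≤ (d : ℝ) := by exact_mod_cast hd
    linarith
  have hvsplit : v x ^ ((2 : ℝ) - n) = v x * v x ^ ((1 : ℝ) - n) := by
    rw [show (2 : ℝ) - n = 1 + (1 - n) by ring, Real.rpow_add (hvpos x), Real.rpow_one]
  rw [hdiv, hess_eq (dfv x), heq x, hvsplit, ← hH]
  have : v x * v x ^ ((1:ℝ) - n) * DP = v x ^ ((1:ℝ)-n) * (DP * v x) := by ring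
  rw [this, key]
  field_simp
  ring
end

section
/- Let d ≥ 2, let n be a real number with n ≥ d, and let v : ℝ^d → ℝ be a positive C³ function satisfying Δv = P at every point, where P := (1/v)·((n/2)‖∇v‖² + c_n). Then for every real number q and every compactly supported C¹ function ψ : ℝ^d → ℝ, one has (n/2 + 1 - q)·∫ v^(-q)·‖∇v‖²·ψ dx + c_n·∫ v^(-q)·ψ dx = - ∫ v^(1-q)·⟨∇v, ∇ψ⟩ dx, where all integrals are over ℝ^d with respect to Lebesgue measure. -/
open MeasureTheory Metric
open scoped RealInnerProductSpace

lemma inner_gradient_eq {d : ℕ} (f : EuclideanSpace ℝ (Fin d) → ℝ) (x y : EuclideanSpace ℝ (Fin d)) :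
    ⟪gradient f x, y⟫ = fderiv ℝ f x y := by
  simp [gradient, InnerProductSpace.toDual_symm_apply]

lemma ibp_lap {d : ℕ} (u φ : EuclideanSpace ℝ (Fin d) → ℝ)
    (hu : ContDiff ℝ 2 u) (hφ : ContDiff ℝ 1 φ) (hφc : HasCompactSupport φ) :
    ∫ x, lap u x * φ x ∂volume = -∫ x, ⟪gradient u x, gradient φ x⟫ ∂volume := by
  set e : Fin d → EuclideanSpace ℝ (Fin d) := fun i => EuclideanSpace.single i 1 with he
  have hD1 : ContDiff ℝ 1 (fderiv ℝ u) := hu.fderiv_right (by norm_num)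
  have hDd : Differentiable ℝ (fderiv ℝ u) := hD1.differentiable (by norm_num)
  have cD : Continuous (fderiv ℝ (fderiv ℝ u)) := hD1.continuous_fderiv (by norm_num)
  have cDu : Continuous (fderiv ℝ u) := hD1.continuous
  have cφ : Continuous φ := hφ.continuous
  have cφ' : Continuous (fderiv ℝ φ) := hφ.continuous_fderiv (by norm_num)
  have hφd : Differentiable ℝ φ := hφ.differentiable (by norm_num)
  -- second derivative description
  have keyD : ∀ i x, fderiv ℝ (fun y => fderiv ℝ u y (e i)) x (e i)
      = fderiv ℝ (fderiv ℝ u) x (e i) (e i) := by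
    intro i x
    rw [fderiv_clm_apply (hDd x) (differentiableAt_const _)]
    simp
  -- integrability
  have int1 : ∀ i, Integrable (fun x => fderiv ℝ (fderiv ℝ u) x (e i) (e i) * φ x) volume := by
    intro i
    exact (((cD.clm_apply continuous_const).clm_apply continuous_const).mul cφ).integrable_of_hasCompactSupport
      hφc.mul_left
  have int2 : ∀ i, Integrable (fun x => fderiv ℝ u x (e i) * fderiv ℝ φ x (e i)) volume := by
    intro i
    exact ((cDu.clm_apply continuous_const).mul (cφ'.clm_apply continuous_const)).integrable_of_hasCompactSupport
      (hφc.fderiv_apply (𝕜 := ℝ) (e i)).mul_left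
  have int3 : ∀ i, Integrable (fun x => fderiv ℝ u x (e i) * φ x) volume := by
    intro i
    exact ((cDu.clm_apply continuous_const).mul cφ).integrable_of_hasCompactSupport hφc.mul_left
  -- per-coordinate IBP
  have key : ∀ i, ∫ x, fderiv ℝ u x (e i) * fderiv ℝ φ x (e i) ∂volume
      = -∫ x, fderiv ℝ (fderiv ℝ u) x (e i) (e i) * φ x ∂volume := by
    intro i
    have h := integral_mul_fderiv_eq_neg_fderiv_mul_of_integrable
      (f := fun y => fderiv ℝ u y (e i)) (g := φ) (v := e i) (μ := volume)
      ?_ (int2 i) (int3 i) (fun x _ => hDd.clm_apply (differentiable_const _) x) (fun x _ => hφd x)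
    · rw [h]
      congr 1
      refine integral_congr_ae (Filter.Eventually.of_forall fun x => ?_)
      simp only [keyD]
    · refine ((int1 i).congr (Filter.Eventually.of_forall fun x => ?_))
      simp only [keyD]
  -- gradient inner as sum
  have hgrad : ∀ x, ⟪gradient u x, gradient φ x⟫
      = ∑ i, fderiv ℝ u x (e i) * fderiv ℝ φ x (e i) := by
    intro x
    have b := (EuclideanSpace.basisFun (Fin d) ℝ)
    rw [← OrthonormalBasis.sum_inner_mul_inner (EuclideanSpace.basisFun (Fin d) ℝ)
      (gradient u x) (gradient φ x)]
    refine Finset.sum_congr rfl fun i _ => ?_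
    rw [real_inner_comm (gradient φ x) ((EuclideanSpace.basisFun (Fin d) ℝ) i)]
    simp only [EuclideanSpace.basisFun_apply, he, inner_gradient_eq]
  have hlap : ∀ x, lap u x = ∑ i, fderiv ℝ (fderiv ℝ u) x (e i) (e i) := by
    intro x
    refine Finset.sum_congr rfl fun i _ => ?_
    rw [iteratedFDeriv_two_apply]
    simp
    rfl
  have RHS : ∫ x, ⟪gradient u x, gradient φ x⟫ ∂volume
      = -∫ x, lap u x * φ x ∂volume := by
    calc ∫ x, ⟪gradient u x, gradient φ x⟫ ∂volume
        = ∫ x, ∑ i, fderiv ℝ u x (e i) * fderiv ℝ φ x (e i) ∂volume := by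
          exact integral_congr_ae (Filter.Eventually.of_forall fun x => hgrad x)
      _ = ∑ i, ∫ x, fderiv ℝ u x (e i) * fderiv ℝ φ x (e i) ∂volume :=
          integral_finset_sum _ (fun i _ => int2 i)
      _ = ∑ i, -∫ x, fderiv ℝ (fderiv ℝ u) x (e i) (e i) * φ x ∂volume :=
          Finset.sum_congr rfl fun i _ => key i
      _ = -∑ i, ∫ x, fderiv ℝ (fderiv ℝ u) x (e i) (e i) * φ x ∂volume := by
          rw [Finset.sum_neg_distrib]
      _ = -∫ x, ∑ i, fderiv ℝ (fderiv ℝ u) x (e i) (e i) * φ x ∂volume := by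
          rw [integral_finset_sum _ (fun i _ => int1 i)]
      _ = -∫ x, lap u x * φ x ∂volume := by
          congr 1
          refine integral_congr_ae (Filter.Eventually.of_forall fun x => ?_)
          simp only [hlap, Finset.sum_mul]
  rw [RHS, neg_neg]

/-- Lemma 4.1, Euclidean case: the basic integral identity for solutions of `Δv = P`. -/
theorem stmt_9 (d : ℕ) (hd : 2 ≤ d) (n : ℝ) (hn : (d : ℝ) ≤ n)
    (v : EuclideanSpace ℝ (Fin d) → ℝ) (hv : ContDiff ℝ 3 v) (hvpos : ∀ x, 0 < v x)
    (P : EuclideanSpace ℝ (Fin d) → ℝ)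
    (hP : ∀ x, P x = (1 / v x) * ((n / 2) * ‖gradient v x‖ ^ 2 + cExp n))
    (heq : ∀ x, lap v x = P x) :
    ∀ (q : ℝ) (ψ : EuclideanSpace ℝ (Fin d) → ℝ),
      ContDiff ℝ 1 ψ → HasCompactSupport ψ →
      (n / 2 + 1 - q) * (∫ x, (v x) ^ (-q) * ‖gradient v x‖ ^ 2 * ψ x ∂volume)
        + cExp n * (∫ x, (v x) ^ (-q) * ψ x ∂volume)
      = -∫ x, (v x) ^ (1 - q) * ⟪gradient v x, gradient ψ x⟫ ∂volume := by
  intro q ψ hψ hψc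
  have hvne : ∀ x, v x ≠ 0 := fun x => (hvpos x).ne'
  have hvd : Differentiable ℝ v := hv.differentiable (by norm_num)
  have cv : Continuous v := hv.continuous
  have cfv : Continuous (fderiv ℝ v) := hv.continuous_fderiv (by norm_num)
  have cgv : Continuous (gradient v) :=
    (InnerProductSpace.toDual ℝ _).symm.continuous.comp cfv
  have cgψ : Continuous (gradient ψ) :=
    (InnerProductSpace.toDual ℝ _).symm.continuous.comp (hψ.continuous_fderiv (by norm_num))
  have hgψc : HasCompactSupport (gradient ψ) :=
    (hψc.fderiv (𝕜 := ℝ)).comp_left (map_zero _)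
  -- the test function
  set φ : EuclideanSpace ℝ (Fin d) → ℝ := fun x => v x ^ (1 - q) * ψ x with hφdef
  have hrpowC : ∀ (p : ℝ), Continuous fun x => v x ^ p := fun p =>
    cv.rpow_const (fun x => Or.inl (hvne x))
  have hφ : ContDiff ℝ 1 φ := by
    refine ContDiff.mul ?_ hψ
    exact contDiff_iff_contDiffAt.mpr fun x =>
      ((hv.of_le (by norm_num)).contDiffAt).rpow_const_of_ne (hvne x)
  have hφc : HasCompactSupport φ := hψc.mul_left
  -- pointwise identities
  have hsplit : ∀ x, v x ^ (1 - q) = v x * v x ^ (-q) := by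
    intro x
    rw [show (1 - q) = 1 + (-q) by ring, Real.rpow_add (hvpos x), Real.rpow_one]
  have hgradφ : ∀ x, ⟪gradient v x, gradient φ x⟫
      = (1 - q) * (v x ^ (-q) * ‖gradient v x‖ ^ 2 * ψ x)
        + v x ^ (1 - q) * ⟪gradient v x, gradient ψ x⟫ := by
    intro x
    have h1 : HasFDerivAt (fun y => v y ^ (1 - q))
        (((1 - q) * v x ^ (1 - q - 1)) • fderiv ℝ v x) x :=
      (hvd x).hasFDerivAt.rpow_const (Or.inl (hvne x))
    have h2 : HasFDerivAt φ
        ((v x ^ (1 - q)) • fderiv ℝ ψ x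
          + ψ x • (((1 - q) * v x ^ (1 - q - 1)) • fderiv ℝ v x)) x :=
      h1.mul ((hψ.differentiable (by norm_num) x).hasFDerivAt)
    rw [real_inner_comm, inner_gradient_eq, h2.fderiv]
    have e1 : fderiv ℝ ψ x (gradient v x) = ⟪gradient v x, gradient ψ x⟫ := by
      rw [real_inner_comm, inner_gradient_eq]
    have e2 : fderiv ℝ v x (gradient v x) = ‖gradient v x‖ ^ 2 := by
      rw [← inner_gradient_eq, real_inner_self_eq_norm_sq]
    have e3 : v x ^ (1 - q - 1) = v x ^ (-q) := by norm_num
    simp only [ContinuousLinearMap.add_apply, ContinuousLinearMap.smul_apply, smul_eq_mul,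
      e1, e2, e3]
    ring
  have hlapφ : ∀ x, lap v x * φ x
      = (n / 2) * (v x ^ (-q) * ‖gradient v x‖ ^ 2 * ψ x)
        + cExp n * (v x ^ (-q) * ψ x) := by
    intro x
    have hv1 : (1 / v x) * v x ^ (1 - q) = v x ^ (-q) := by
      rw [hsplit x]
      field_simp
      rw [mul_comm, mul_div_assoc, div_self (hvne x), mul_one]
    calc lap v x * φ x
        = ((1 / v x) * v x ^ (1 - q)) * ((n / 2) * ‖gradient v x‖ ^ 2 + cExp n) * ψ x := by
          rw [heq, hP, hφdef]; ring
      _ = (n / 2) * (v x ^ (-q) * ‖gradient v x‖ ^ 2 * ψ x) + cExp n * (v x ^ (-q) * ψ x) := by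
          rw [hv1]; ring
  -- integrability
  have intA : Integrable (fun x => v x ^ (-q) * ‖gradient v x‖ ^ 2 * ψ x) volume :=
    (((hrpowC (-q)).mul (cgv.norm.pow 2)).mul hψ.continuous).integrable_of_hasCompactSupport
      hψc.mul_left
  have intB : Integrable (fun x => v x ^ (-q) * ψ x) volume :=
    ((hrpowC (-q)).mul hψ.continuous).integrable_of_hasCompactSupport hψc.mul_left
  have intC : Integrable (fun x => v x ^ (1 - q) * ⟪gradient v x, gradient ψ x⟫) volume := by
    refine (((hrpowC (1 - q)).mul (cgv.inner cgψ)).integrable_of_hasCompactSupport ?_)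
    refine HasCompactSupport.mul_left ?_
    refine HasCompactSupport.of_support_subset_isCompact hgψc.isCompact ?_
    intro x hx
    have : gradient ψ x ≠ 0 := by
      intro h0
      apply hx
      simp [Function.mem_support] at hx ⊢
      rw [← inner_gradient_eq, h0, inner_zero_left]
    exact subset_tsupport _ (by simpa [Function.mem_support] using this)
  -- integration by parts
  have hibp := ibp_lap v φ (hv.of_le (by norm_num)) hφ hφc
  have hL : ∫ x, lap v x * φ x ∂volume
      = (n / 2) * (∫ x, v x ^ (-q) * ‖gradient v x‖ ^ 2 * ψ x ∂volume)
        + cExp n * (∫ x, v x ^ (-q) * ψ x ∂volume) := by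
    rw [integral_congr_ae (Filter.Eventually.of_forall hlapφ),
      integral_add (intA.const_mul _) (intB.const_mul _), integral_const_mul, integral_const_mul]
  have hR : ∫ x, ⟪gradient v x, gradient φ x⟫ ∂volume
      = (1 - q) * (∫ x, v x ^ (-q) * ‖gradient v x‖ ^ 2 * ψ x ∂volume)
        + ∫ x, v x ^ (1 - q) * ⟪gradient v x, gradient ψ x⟫ ∂volume := by
    rw [integral_congr_ae (Filter.Eventually.of_forall hgradφ),
      integral_add (intA.const_mul _) intC, integral_const_mul]
  rw [hL, hR] at hibp
  linarith
end

section
/- Let d ≥ 3 and let u : ℝ^d → ℝ be a positive C³ function satisfying -Δu = u^((d+2)/(d-2)) at every point of ℝ^d. If ∫_{ℝ^d} u^(2d/(d-2)) dx < ∞ (with respect to Lebesgue measure), then ∫_{ℝ^d} ‖∇u‖² dx < ∞. -/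
set_option maxHeartbeats 2000000

open MeasureTheory Metric

section Helpers
open Real Set


noncomputable instance {m : ℕ} : PartialOrder (EuclideanSpace ℝ (Fin m)) :=
  PartialOrder.lift WithLp.ofLp (WithLp.ofLp_injective 2)

lemma abs_apply_le_norm {m : ℕ} (x : EuclideanSpace ℝ (Fin m)) (i : Fin m) : |x i| ≤ ‖x‖ := by
  rw [EuclideanSpace.norm_eq]
  calc |x i| = √(‖x i‖^2) := by rw [Real.sqrt_sq_eq_abs, Real.norm_eq_abs, abs_abs]
  _ ≤ _ := Real.sqrt_le_sqrt <|
      Finset.single_le_sum (f := fun j => ‖x j‖^2) (fun j _ => by positivity) (Finset.mem_univ i)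

theorem divergence_int_zero {n : ℕ} (f : Fin (n+1) → EuclideanSpace ℝ (Fin (n+1)) → ℝ)
    (f' : Fin (n+1) → EuclideanSpace ℝ (Fin (n+1)) → (EuclideanSpace ℝ (Fin (n+1)) →L[ℝ] ℝ))
    (hder : ∀ x i, HasFDerivAt (f i) (f' i x) x)
    (M : ℝ) (hM : 0 < M) (hsupp : ∀ i x, M ≤ ‖x‖ → f i x = 0)
    (hInt : Integrable (fun x => ∑ i, f' i x (EuclideanSpace.single i 1)) volume) :
    ∫ x, ∑ i, f' i x (EuclideanSpace.single i 1) = 0 := by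
  set eL := EuclideanSpace.equiv (Fin (n+1)) ℝ
  set a : EuclideanSpace ℝ (Fin (n+1)) := eL.symm (fun _ => -(M+1)) with ha
  set b : EuclideanSpace ℝ (Fin (n+1)) := eL.symm (fun _ => (M+1)) with hb
  -- points outside `Icc a b` have norm > M
  have hout : ∀ x : EuclideanSpace ℝ (Fin (n+1)), x ∉ Icc a b → M < ‖x‖ := by
    intro x hx
    rw [Set.mem_Icc] at hx
    have : ∃ i, M + 1 ≤ |x i| := by
      by_contra h
      push_neg at h
      refine hx ⟨fun i => ?_, fun i => ?_⟩ <;>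
      · have h2 := h i
        rw [abs_lt] at h2
        have hai : a i = -(M+1) := rfl
        have hbi : b i = M+1 := rfl
        show _ ≤ _
        first
        | (rw [hai]; linarith [h2.1])
        | (rw [hbi]; linarith [h2.2])
    obtain ⟨i, hi⟩ := this
    calc M < M + 1 := by linarith
    _ ≤ |x i| := hi
    _ ≤ ‖x‖ := abs_apply_le_norm x i
  have hf'zero : ∀ x : EuclideanSpace ℝ (Fin (n+1)), M < ‖x‖ → ∀ i, f' i x = 0 := by
    intro x hx i
    have hopen : {y : EuclideanSpace ℝ (Fin (n+1)) | M < ‖y‖} ∈ nhds x :=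
      (isOpen_lt continuous_const continuous_norm).mem_nhds hx
    have h0 : HasFDerivAt (f i) (0 : EuclideanSpace ℝ (Fin (n+1)) →L[ℝ] ℝ) x := by
      have : f i =ᶠ[nhds x] (fun _ => 0) :=
        Filter.eventually_of_mem hopen (fun y hy => hsupp i y (le_of_lt hy))
      exact (hasFDerivAt_const (E := EuclideanSpace ℝ (Fin (n+1))) (𝕜 := ℝ) (0:ℝ) x).congr_of_eventuallyEq this
    exact (hder x i).unique h0
  have key := integral_divergence_of_hasFDerivAt_off_countable_of_equiv eL
    (fun _ _ => Iff.rfl) (EuclideanSpace.volume_preserving_symm_measurableEquiv_toLp (Fin (n+1)))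
    f f' ∅ countable_empty a b
    (fun i => by
      have hai : a i = -(M+1) := rfl
      have hbi : b i = M+1 := rfl
      show a i ≤ b i
      rw [hai, hbi]; linarith)
    (fun i => fun j _ => (hder j i).continuousAt.continuousWithinAt)
    (fun x _ i => hder x i)
    (fun x => ∑ i, f' i x (EuclideanSpace.single i 1)) (fun x => rfl)
    hInt.integrableOn
  · rw [setIntegral_eq_integral_of_forall_compl_eq_zero
      (fun x hx => by
        simp only [hf'zero x (hout x hx), ContinuousLinearMap.zero_apply, Finset.sum_const_zero])]
      at key
    rw [key]
    apply Finset.sum_eq_zero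
    intro i _
    have hface : ∀ (c : ℝ), M + 1 ≤ |c| →
        ∀ y : Fin n → ℝ, f i (eL.symm (i.insertNth c y)) = 0 := by
      intro c hc y
      apply hsupp
      calc M ≤ M + 1 := by linarith
      _ ≤ |c| := hc
      _ = |(eL.symm (i.insertNth c y)) i| := by
          simp [eL, Fin.insertNth_apply_same]
      _ ≤ ‖_‖ := abs_apply_le_norm _ i
    have h1 : ∀ y : Fin n → ℝ, f i (eL.symm (i.insertNth (eL b i) y)) = 0 := by
      intro y; apply hface
      simp [hb, eL]
      rw [abs_of_nonneg] <;> linarith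
    have h2 : ∀ y : Fin n → ℝ, f i (eL.symm (i.insertNth (eL a i) y)) = 0 := by
      intro y; apply hface
      simp [ha, eL]
      rw [abs_of_nonpos] <;> linarith
    simp only [h1, h2, integral_zero, sub_zero, sub_self]


lemma st_deriv_zero_of_neg {t : ℝ} (ht : t < 0) : deriv Real.smoothTransition t = 0 := by
  have h : Real.smoothTransition =ᶠ[nhds t] (fun _ => (0:ℝ)) :=
    Filter.eventually_of_mem (Iio_mem_nhds ht)
      (fun y hy => Real.smoothTransition.zero_of_nonpos (le_of_lt hy))
  rw [h.deriv_eq, deriv_const]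

lemma st_deriv_zero_of_gt {t : ℝ} (ht : 1 < t) : deriv Real.smoothTransition t = 0 := by
  have h : Real.smoothTransition =ᶠ[nhds t] (fun _ => (1:ℝ)) :=
    Filter.eventually_of_mem (Ioi_mem_nhds ht)
      (fun y hy => Real.smoothTransition.one_of_one_le (le_of_lt hy))
  rw [h.deriv_eq, deriv_const]

lemma st_deriv_bound : ∃ B : ℝ, 0 ≤ B ∧ ∀ t, |deriv Real.smoothTransition t| ≤ B := by
  have hc : Continuous (deriv Real.smoothTransition) :=
    (Real.smoothTransition.contDiff (n := 1)).continuous_deriv le_rfl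
  obtain ⟨C, hC⟩ := isCompact_Icc.exists_bound_of_continuousOn (s := Icc (0:ℝ) 1)
    hc.continuousOn
  refine ⟨max C 0, le_max_right _ _, fun t => ?_⟩
  rcases le_or_gt t 1 with h1 | h1
  · rcases le_or_gt 0 t with h0 | h0
    · have := hC t ⟨h0, h1⟩
      rw [Real.norm_eq_abs] at this
      exact this.trans (le_max_left _ _)
    · rw [st_deriv_zero_of_neg h0]; simp
  · rw [st_deriv_zero_of_gt h1]; simp

noncomputable def cutoff {m : ℕ} (R : ℝ) (x : EuclideanSpace ℝ (Fin m)) : ℝ :=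
  Real.smoothTransition ((4 - ‖x‖^2/R^2)/3)

lemma cutoff_nonneg {m : ℕ} (R : ℝ) (x : EuclideanSpace ℝ (Fin m)) : 0 ≤ cutoff R x :=
  Real.smoothTransition.nonneg _

lemma cutoff_le_one {m : ℕ} (R : ℝ) (x : EuclideanSpace ℝ (Fin m)) : cutoff R x ≤ 1 :=
  Real.smoothTransition.le_one _

lemma cutoff_eq_one {m : ℕ} {R : ℝ} (hR : 0 < R) {x : EuclideanSpace ℝ (Fin m)}
    (hx : ‖x‖ ≤ R) : cutoff R x = 1 := by
  apply Real.smoothTransition.one_of_one_le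
  have h1 : ‖x‖^2 ≤ R^2 := by nlinarith [norm_nonneg x]
  have h2 : ‖x‖^2/R^2 ≤ 1 := by
    rw [div_le_one (by positivity)]; exact h1
  linarith

lemma cutoff_eq_zero {m : ℕ} {R : ℝ} (hR : 0 < R) {x : EuclideanSpace ℝ (Fin m)}
    (hx : 2*R ≤ ‖x‖) : cutoff R x = 0 := by
  apply Real.smoothTransition.zero_of_nonpos
  have h1 : (2*R)^2 ≤ ‖x‖^2 := by nlinarith
  have h2 : (4:ℝ) ≤ ‖x‖^2/R^2 := by
    rw [le_div_iff₀ (by positivity)]; nlinarith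
  linarith

lemma cutoff_contDiff {m : ℕ} {R : ℝ} (hR : 0 < R) (n : ℕ) :
    ContDiff ℝ n (cutoff (m := m) R) := by
  apply Real.smoothTransition.contDiff.comp
  exact (contDiff_const.sub ((contDiff_norm_sq ℝ).div_const _)).div_const _

lemma cutoff_hasCompactSupport {m : ℕ} {R : ℝ} (hR : 0 < R) :
    HasCompactSupport (cutoff (m := m) R) := by
  apply HasCompactSupport.intro (isCompact_closedBall (0 : EuclideanSpace ℝ (Fin m)) (2*R))
  intro x hx
  rw [mem_closedBall_zero_iff] at hx
  push_neg at hx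
  exact cutoff_eq_zero hR (le_of_lt hx)

lemma cutoff_hasFDerivAt {m : ℕ} {R : ℝ} (hR : 0 < R) (x : EuclideanSpace ℝ (Fin m)) :
    HasFDerivAt (cutoff R)
      ((deriv Real.smoothTransition (4/3 - (3*R^2)⁻¹*‖x‖^2)) •
        (-(((3*R^2)⁻¹ : ℝ) • ((2:ℕ) • innerSL ℝ x)))) x := by
  have hn : HasFDerivAt (fun y : EuclideanSpace ℝ (Fin m) => ‖y‖^2) ((2:ℕ) • innerSL ℝ x) x :=
    (hasStrictFDerivAt_norm_sq x).hasFDerivAt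
  have h2 : HasFDerivAt (fun y : EuclideanSpace ℝ (Fin m) => 4/3 - (3*R^2)⁻¹*‖y‖^2)
      (-(((3*R^2)⁻¹ : ℝ) • ((2:ℕ) • innerSL ℝ x))) x :=
    (hn.const_mul ((3*R^2)⁻¹)).const_sub (4/3)
  have hst : HasDerivAt Real.smoothTransition
      (deriv Real.smoothTransition (4/3 - (3*R^2)⁻¹*‖x‖^2)) (4/3 - (3*R^2)⁻¹*‖x‖^2) :=
    ((Real.smoothTransition.contDiff (n := 1)).differentiable (by norm_num) _).hasDerivAt
  have key := hst.comp_hasFDerivAt x h2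
  have hfun : cutoff (m := m) R =
      fun y => Real.smoothTransition (4/3 - (3*R^2)⁻¹*‖y‖^2) := by
    funext y
    unfold cutoff
    congr 1
    field_simp
  rw [hfun]
  simpa [Function.comp_def] using key

lemma cutoff_fderiv_bound : ∃ C : ℝ, 0 < C ∧ ∀ (m : ℕ) (R : ℝ), 0 < R →
    ∀ x : EuclideanSpace ℝ (Fin m), ‖fderiv ℝ (cutoff R) x‖ ≤ C / R := by
  obtain ⟨B, hB0, hB⟩ := st_deriv_bound
  refine ⟨4*B/3 + 1, by positivity, fun m R hR x => ?_⟩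
  rw [(cutoff_hasFDerivAt hR x).fderiv]
  have hK : ‖((2:ℕ) • innerSL ℝ x : EuclideanSpace ℝ (Fin m) →L[ℝ] ℝ)‖ ≤ 2 * ‖x‖ := by
    rw [two_smul]
    calc ‖(innerSL ℝ x : EuclideanSpace ℝ (Fin m) →L[ℝ] ℝ) + innerSL ℝ x‖
        ≤ ‖(innerSL ℝ x : EuclideanSpace ℝ (Fin m) →L[ℝ] ℝ)‖ + ‖(innerSL ℝ x : EuclideanSpace ℝ (Fin m) →L[ℝ] ℝ)‖ := norm_add_le _ _
    _ ≤ 2 * ‖x‖ := by rw [innerSL_apply_norm]; ring_nf; rfl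
  rcases le_or_gt ‖x‖ (2*R) with hx | hx
  · rw [norm_smul, norm_neg, norm_smul, Real.norm_eq_abs, Real.norm_eq_abs,
      abs_of_pos (show (0:ℝ) < (3*R^2)⁻¹ by positivity)]
    calc |deriv Real.smoothTransition (4/3 - (3*R^2)⁻¹*‖x‖^2)| *
        ((3*R^2)⁻¹ * ‖(2:ℕ) • innerSL ℝ x‖)
        ≤ B * ((3*R^2)⁻¹ * (2*(2*R))) := by
          apply mul_le_mul (hB _) ?_ (by positivity) hB0
          apply mul_le_mul_of_nonneg_left ?_ (by positivity)
          exact hK.trans (by linarith)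
    _ = 4*B/3 / R := by field_simp; ring
    _ ≤ (4*B/3 + 1) / R := by gcongr; linarith
  · have h1 : 4*R^2 < ‖x‖^2 := by nlinarith
    have hs : 4/3 - (3*R^2)⁻¹*‖x‖^2 < 0 := by
      have hc : (0:ℝ) < (3*R^2)⁻¹ := by positivity
      have hc1 : (3*R^2)⁻¹ * (3*R^2) = 1 := inv_mul_cancel₀ (by positivity)
      nlinarith [mul_lt_mul_of_pos_left h1 hc]
    rw [st_deriv_zero_of_neg hs, zero_smul, norm_zero]
    positivity


lemma inner_gradient {m : ℕ} (f : EuclideanSpace ℝ (Fin m) → ℝ) (x v : EuclideanSpace ℝ (Fin m)) :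
    (inner ℝ (gradient f x) v : ℝ) = fderiv ℝ f x v :=
  InnerProductSpace.toDual_symm_apply

lemma norm_gradient {m : ℕ} (f : EuclideanSpace ℝ (Fin m) → ℝ) (x : EuclideanSpace ℝ (Fin m)) :
    ‖gradient f x‖ = ‖fderiv ℝ f x‖ :=
  (InnerProductSpace.toDual ℝ _).symm.norm_map (fderiv ℝ f x)

lemma gradient_continuous {m : ℕ} {f : EuclideanSpace ℝ (Fin m) → ℝ} (hf : ContDiff ℝ 3 f) :
    Continuous (gradient f) :=
  (InnerProductSpace.toDual ℝ _).symm.continuous.comp (hf.continuous_fderiv (by norm_num))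

lemma sum_fderiv_mul {m : ℕ} (f g : EuclideanSpace ℝ (Fin m) → ℝ) (x : EuclideanSpace ℝ (Fin m)) :
    ∑ i, fderiv ℝ f x (EuclideanSpace.single i 1) * fderiv ℝ g x (EuclideanSpace.single i 1)
      = fderiv ℝ f x (gradient g x) := by
  have hrep := (EuclideanSpace.basisFun (Fin m) ℝ).sum_repr (gradient g x)
  conv_rhs => rw [← hrep]
  rw [map_sum]
  refine Finset.sum_congr rfl (fun i _ => ?_)
  rw [EuclideanSpace.basisFun_apply, EuclideanSpace.basisFun_repr, ContinuousLinearMap.map_smul, smul_eq_mul]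
  have h : fderiv ℝ g x (EuclideanSpace.single i 1) = (gradient g x) i := by
    rw [← inner_gradient, EuclideanSpace.inner_single_right]
    simp
  rw [h]; ring

lemma sum_fderiv_sq {m : ℕ} (f : EuclideanSpace ℝ (Fin m) → ℝ) (x : EuclideanSpace ℝ (Fin m)) :
    ∑ i, (fderiv ℝ f x (EuclideanSpace.single i 1))^2 = ‖gradient f x‖^2 := by
  have h := sum_fderiv_mul f f x
  simp only [← pow_two] at h
  rw [h, ← inner_gradient, real_inner_self_eq_norm_sq]


lemma sq_int_bound {m : ℕ} (hm : 3 ≤ m) (u : EuclideanSpace ℝ (Fin m) → ℝ)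
    (hu : Continuous u) (hupos : ∀ x, 0 < u x)
    (hint : Integrable (fun x => u x ^ (2*(m:ℝ)/((m:ℝ)-2))) volume) :
    ∃ K : ℝ, 0 ≤ K ∧ ∀ R : ℝ, 0 < R →
      ∫ x in closedBall (0:EuclideanSpace ℝ (Fin m)) (2*R), (u x)^2 ≤ R^2 * K := by
  have hm2 : (0:ℝ) < (m:ℝ) - 2 := by
    have : (3:ℝ) ≤ (m:ℝ) := by exact_mod_cast hm
    linarith
  have hm0 : (0:ℝ) < (m:ℝ) := by linarith
  set q : ℝ := 2*(m:ℝ)/((m:ℝ)-2) with hq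
  set pd : ℝ := (m:ℝ)/((m:ℝ)-2) with hpd
  set qd : ℝ := (m:ℝ)/2 with hqd
  have hpd1 : 1 < pd := by
    rw [hpd, lt_div_iff₀ hm2]; linarith
  have hpd0 : 0 < pd := lt_trans one_pos hpd1
  have hpq : pd.HolderConjugate qd := by
    rw [Real.holderConjugate_iff]
    constructor
    · exact hpd1
    · rw [hpd, hqd]
      rw [inv_div, inv_div]
      field_simp
      ring
  set A : ENNReal := ∫⁻ x, ENNReal.ofReal (u x ^ q) with hA
  have hAeq : A = ENNReal.ofReal (∫ x, u x ^ q) := by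
    rw [hA, ← ofReal_integral_eq_lintegral_ofReal hint
      (Filter.Eventually.of_forall (fun x => Real.rpow_nonneg (le_of_lt (hupos x)) q))]
  have hAne : A ≠ ⊤ := by rw [hAeq]; exact ENNReal.ofReal_ne_top
  set volC : ENNReal := volume (ball (0:EuclideanSpace ℝ (Fin m)) 1) with hvolC
  have hvolCne : volC ≠ ⊤ := measure_ball_lt_top.ne
  set KE : ENNReal := A ^ (1/pd) * volC ^ (2/(m:ℝ)) with hKE
  have hKEne : KE ≠ ⊤ :=
    ENNReal.mul_ne_top (ENNReal.rpow_ne_top_of_nonneg (by positivity) hAne)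
      (ENNReal.rpow_ne_top_of_nonneg (by positivity) hvolCne)
  refine ⟨4 * KE.toReal, by positivity, fun R hR => ?_⟩
  set cb := closedBall (0:EuclideanSpace ℝ (Fin m)) (2*R) with hcb
  have hIu2 : IntegrableOn (fun x => u x ^ 2) cb volume :=
    (hu.pow 2).continuousOn.integrableOn_compact (isCompact_closedBall _ _)
  have step1 : ENNReal.ofReal (∫ x in cb, u x ^ 2) = ∫⁻ x in cb, ENNReal.ofReal (u x ^ 2) :=
    ofReal_integral_eq_lintegral_ofReal hIu2
      (Filter.Eventually.of_forall (fun x => sq_nonneg _))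
  have step2 : (∫⁻ x in cb, ENNReal.ofReal (u x ^ 2)) ≤
      (∫⁻ x in cb, ENNReal.ofReal (u x ^ 2) ^ pd) ^ (1/pd) * (volume cb) ^ (1/qd) := by
    have hmeas : AEMeasurable (fun x => ENNReal.ofReal (u x ^ 2))
        (volume.restrict cb) :=
      (ENNReal.measurable_ofReal.comp (hu.pow 2).measurable).aemeasurable
    have h := ENNReal.lintegral_mul_le_Lp_mul_Lq (volume.restrict cb) hpq hmeas
      (aemeasurable_const (b := (1:ENNReal)))
    simpa using h
  have step3 : ∀ x : EuclideanSpace ℝ (Fin m),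
      ENNReal.ofReal (u x ^ 2) ^ pd = ENNReal.ofReal (u x ^ q) := by
    intro x
    rw [ENNReal.ofReal_rpow_of_nonneg (sq_nonneg _) (le_of_lt hpd0)]
    congr 1
    rw [← Real.rpow_natCast (u x) 2, ← Real.rpow_mul (le_of_lt (hupos x))]
    congr 1
    rw [hq, hpd]
    push_cast
    ring
  have step4 : (∫⁻ x in cb, ENNReal.ofReal (u x ^ 2) ^ pd) ≤ A := by
    simp only [step3]
    exact setLIntegral_le_lintegral _ _
  have step5 : volume cb = ENNReal.ofReal ((2*R)^m) * volC := by
    rw [hcb, hvolC, Measure.addHaar_closedBall volume 0 (by positivity)]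
    rw [finrank_euclideanSpace_fin]
  have step6 : (volume cb) ^ (1/qd) = ENNReal.ofReal (4*R^2) * volC ^ (2/(m:ℝ)) := by
    rw [step5, ENNReal.mul_rpow_of_nonneg _ _ (by positivity)]
    congr 1
    · rw [ENNReal.ofReal_rpow_of_nonneg (by positivity) (by positivity)]
      congr 1
      rw [← Real.rpow_natCast (2*R) m, ← Real.rpow_mul (by positivity)]
      rw [show (m:ℝ) * (1/qd) = 2 by rw [hqd]; field_simp]
      rw [show ((2*R):ℝ) ^ (2:ℝ) = 4*R^2 by rw [Real.rpow_two]; ring]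
    · congr 1
      rw [hqd]; field_simp
  have main : ENNReal.ofReal (∫ x in cb, u x ^ 2) ≤ ENNReal.ofReal (4*R^2) * KE := by
    rw [step1]
    calc (∫⁻ x in cb, ENNReal.ofReal (u x ^ 2)) ≤
        (∫⁻ x in cb, ENNReal.ofReal (u x ^ 2) ^ pd) ^ (1/pd) * (volume cb) ^ (1/qd) := step2
    _ ≤ A ^ (1/pd) * (ENNReal.ofReal (4*R^2) * volC ^ (2/(m:ℝ))) := by
        rw [step6]
        exact mul_le_mul_left (ENNReal.rpow_le_rpow step4 (by positivity)) _
    _ = ENNReal.ofReal (4*R^2) * KE := by rw [hKE]; ring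
  have hnn : 0 ≤ ∫ x in cb, u x ^ 2 :=
    setIntegral_nonneg measurableSet_closedBall (fun x _ => sq_nonneg _)
  have := ENNReal.toReal_mono (ENNReal.mul_ne_top ENNReal.ofReal_ne_top hKEne) main
  rw [ENNReal.toReal_ofReal hnn, ENNReal.toReal_mul, ENNReal.toReal_ofReal (by positivity)]
    at this
  calc ∫ x in cb, u x ^ 2 ≤ 4*R^2 * KE.toReal := this
  _ = R^2 * (4 * KE.toReal) := by ring

theorem green0 {n : ℕ} (u φ : EuclideanSpace ℝ (Fin (n+1)) → ℝ)
    (hu : ContDiff ℝ 3 u) (hφ : ContDiff ℝ 2 φ) (hφc : HasCompactSupport φ) :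
    ∫ x, ((∑ i, fderiv ℝ φ x (EuclideanSpace.single i 1) *
        fderiv ℝ u x (EuclideanSpace.single i 1)) + φ x * lap u x) = 0 := by
  set e : Fin (n+1) → EuclideanSpace ℝ (Fin (n+1)) := fun i => EuclideanSpace.single i 1 with he
  have hu1 : ContDiff ℝ 2 (fderiv ℝ u) := hu.fderiv_right (by norm_num)
  have hu1d : Differentiable ℝ (fderiv ℝ u) := hu1.differentiable (by norm_num)
  have hφd : Differentiable ℝ φ := hφ.differentiable (by norm_num)
  set f : Fin (n+1) →  EuclideanSpace ℝ (Fin (n+1)) → ℝ := fun i x => φ x * fderiv ℝ u x (e i) with hf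
  set f' : Fin (n+1) →  EuclideanSpace ℝ (Fin (n+1)) → (EuclideanSpace ℝ (Fin (n+1)) →L[ℝ] ℝ) := fun i x =>
    (φ x) • ((fderiv ℝ (fderiv ℝ u) x).flip (e i)) + (fderiv ℝ u x (e i)) • fderiv ℝ φ x with hf'
  have hder : ∀ (x : EuclideanSpace ℝ (Fin (n+1))) i, HasFDerivAt (f i) (f' i x) x := by
    intro x i
    have hg : HasFDerivAt (fun y => fderiv ℝ u y (e i))
        ((fderiv ℝ (fderiv ℝ u) x).flip (e i)) x := by
      have h1 : HasFDerivAt (fderiv ℝ u) (fderiv ℝ (fderiv ℝ u) x) x := (hu1d x).hasFDerivAt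
      have h2 := h1.clm_apply (hasFDerivAt_const (e i) x)
      simpa using h2
    exact (hφd x).hasFDerivAt.mul hg
  obtain ⟨r, hr⟩ := hφc.isBounded.subset_closedBall 0
  have hφzero : ∀ x : EuclideanSpace ℝ (Fin (n+1)), max r 0 + 1 ≤ ‖x‖ → φ x = 0 := by
    intro x hx
    apply image_eq_zero_of_notMem_tsupport
    intro hmem
    have := mem_closedBall_zero_iff.mp (hr hmem)
    have : ‖x‖ ≤ max r 0 := this.trans (le_max_left _ _)
    linarith
  have hφzero' : ∀ x : EuclideanSpace ℝ (Fin (n+1)), max r 0 + 1 ≤ ‖x‖ → fderiv ℝ φ x = 0 := by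
    intro x hx
    by_contra h
    have hx2 : x ∈ tsupport φ := support_fderiv_subset ℝ (Function.mem_support.mpr h)
    have := mem_closedBall_zero_iff.mp (hr hx2)
    have : ‖x‖ ≤ max r 0 := this.trans (le_max_left _ _)
    linarith
  -- pointwise identity between the divergence and the integrand
  have hpt : ∀ x : EuclideanSpace ℝ (Fin (n+1)), (∑ i, f' i x (e i)) =
      (∑ i, fderiv ℝ φ x (e i) * fderiv ℝ u x (e i)) + φ x * lap u x := by
    intro x
    have hlap : lap u x = ∑ i, fderiv ℝ (fderiv ℝ u) x (e i) (e i) := by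
      unfold lap
      refine Finset.sum_congr rfl (fun i _ => ?_)
      rw [iteratedFDeriv_two_apply]
      simp [he]
    rw [hlap]
    simp only [hf', ContinuousLinearMap.add_apply, ContinuousLinearMap.smul_apply,
      ContinuousLinearMap.flip_apply, smul_eq_mul]
    rw [Finset.sum_add_distrib, Finset.mul_sum]
    rw [add_comm]
    congr 1
    · exact Finset.sum_congr rfl (fun i _ => by ring)
  -- continuity of the divergence
  have hcont : Continuous (fun x : EuclideanSpace ℝ (Fin (n+1)) =>
      (∑ i, fderiv ℝ φ x (e i) * fderiv ℝ u x (e i)) + φ x * lap u x) := by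
    have c1 : Continuous (fderiv ℝ u) := hu.continuous_fderiv (by norm_num)
    have c2 : Continuous (fderiv ℝ φ) := hφ.continuous_fderiv (by norm_num)
    have c3 : Continuous (fderiv ℝ (fderiv ℝ u)) := hu1.continuous_fderiv (by norm_num)
    have clap : Continuous (lap u) := by
      unfold lap
      apply continuous_finset_sum
      intro i _
      have : Continuous (fun x : EuclideanSpace ℝ (Fin (n+1)) => fderiv ℝ (fderiv ℝ u) x (e i) (e i)) :=
        (c3.clm_apply continuous_const).clm_apply continuous_const
      refine this.congr (fun x => ?_)
      rw [iteratedFDeriv_two_apply]; simp [he]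
    exact ((continuous_finset_sum _ (fun i _ =>
      (c2.clm_apply continuous_const).mul (c1.clm_apply continuous_const)))).add
      (hφ.continuous.mul clap)
  have hsuppg : HasCompactSupport (fun x : EuclideanSpace ℝ (Fin (n+1)) =>
      (∑ i, fderiv ℝ φ x (e i) * fderiv ℝ u x (e i)) + φ x * lap u x) := by
    apply HasCompactSupport.intro (isCompact_closedBall (0:EuclideanSpace ℝ (Fin (n+1))) (max r 0 + 1))
    intro x hx
    have hx' : max r 0 + 1 ≤ ‖x‖ := by
      rw [mem_closedBall_zero_iff] at hx; push_neg at hx; linarith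
    simp [hφzero x hx', hφzero' x hx']
  have hInt : Integrable (fun x : EuclideanSpace ℝ (Fin (n+1)) => ∑ i, f' i x (e i)) volume := by
    have h2 := hcont.integrable_of_hasCompactSupport (μ := volume) hsuppg
    exact h2.congr (Filter.Eventually.of_forall (fun x => (hpt x).symm))
  have key := divergence_int_zero f f' hder (max r 0 + 1) (by positivity)
    (fun i x hx => by simp [hf, hφzero x hx])
    hInt
  rw [← integral_congr_ae (Filter.Eventually.of_forall hpt)]
  exact key

end Helpers

open Real Set in
/-- Step (5.17) of Theorem 1.1 (iii), Euclidean case: a positive solution of the critical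
Laplace equation that lies in `L^(2d/(d-2))` has finite Dirichlet energy. -/
theorem stmt_18 (d : ℕ) (hd : 3 ≤ d)
    (u : EuclideanSpace ℝ (Fin d) → ℝ) (hu : ContDiff ℝ 3 u) (hupos : ∀ x, 0 < u x)
    (heq : ∀ x, -lap u x = u x ^ (((d : ℝ) + 2) / ((d : ℝ) - 2)))
    (hint : Integrable (fun x : EuclideanSpace ℝ (Fin d) =>
      u x ^ (2 * (d : ℝ) / ((d : ℝ) - 2))) volume) :
    Integrable (fun x : EuclideanSpace ℝ (Fin d) => ‖gradient u x‖ ^ 2) volume := by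
  obtain ⟨n, rfl⟩ : ∃ n, d = n + 1 := ⟨d - 1, by omega⟩
  have hd3 : (3:ℝ) ≤ ((n+1 : ℕ) : ℝ) := by exact_mod_cast hd
  have hdm2 : (0:ℝ) < ((n+1:ℕ):ℝ) - 2 := by linarith
  set p : ℝ := (((n+1:ℕ):ℝ) + 2)/(((n+1:ℕ):ℝ) - 2) with hp
  set q : ℝ := 2*((n+1:ℕ):ℝ)/(((n+1:ℕ):ℝ)-2) with hq'
  have hne : ((n+1:ℕ):ℝ) - 2 ≠ 0 := ne_of_gt hdm2
  have hq : ∀ x, u x * u x ^ p = u x ^ q := by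
    intro x
    rw [show q = 1 + p by
        rw [hp, hq']
        have h0 : ((n:ℝ)+1) - 2 ≠ 0 := by push_cast at hdm2; linarith
        push_cast
        field_simp
        ring,
      Real.rpow_add (hupos x), Real.rpow_one]
  have hucont : Continuous u := hu.continuous
  have hgradc : Continuous (gradient u) := gradient_continuous hu
  have hGcont : Continuous (fun x : EuclideanSpace ℝ (Fin (n+1)) => ‖gradient u x‖^2) :=
    (hgradc.norm).pow 2
  obtain ⟨C, hC0, hCb⟩ := cutoff_fderiv_bound
  obtain ⟨K, hK0, hKb⟩ := sq_int_bound hd u hucont hupos hint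
  set I : ℝ := ∫ x, u x ^ q with hI
  have hI0 : 0 ≤ I := integral_nonneg (fun x => Real.rpow_nonneg (hupos x).le q)
  set Mb : ℝ := 2*I + 4*C^2*K with hMb
  -- integrability of the localized energy
  have Ig1 : ∀ R : ℝ, 0 < R → Integrable
      (fun x : EuclideanSpace ℝ (Fin (n+1)) => (cutoff R x)^2 * ‖gradient u x‖^2) volume := by
    intro R hR
    apply Continuous.integrable_of_hasCompactSupport
      ((((cutoff_contDiff hR 3).continuous).pow 2).mul hGcont)
    apply HasCompactSupport.intro (isCompact_closedBall
      (0 : EuclideanSpace ℝ (Fin (n+1))) (2*R))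
    intro x hx
    rw [mem_closedBall_zero_iff] at hx
    push_neg at hx
    simp [cutoff_eq_zero hR hx.le]
  -- the key uniform bound
  have key : ∀ R : ℝ, 0 < R →
      ∫ x, (cutoff R x)^2 * ‖gradient u x‖^2 ≤ Mb := by
    intro R hR
    have hη3 : ContDiff ℝ 3 (cutoff (m := n+1) R) := cutoff_contDiff hR 3
    have hηc : HasCompactSupport (cutoff (m := n+1) R) := cutoff_hasCompactSupport hR
    have hηcont : Continuous (cutoff (m := n+1) R) := hη3.continuous
    have hηfc : Continuous (fderiv ℝ (cutoff (m := n+1) R)) :=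
      hη3.continuous_fderiv (by norm_num)
    have hsuppη : Function.support (cutoff (m := n+1) R) ⊆
        closedBall (0 : EuclideanSpace ℝ (Fin (n+1))) (2*R) := by
      intro x hx
      rw [Function.mem_support] at hx
      rw [mem_closedBall_zero_iff]
      by_contra hxx
      push_neg at hxx
      exact hx (cutoff_eq_zero hR hxx.le)
    have htsupp : tsupport (cutoff (m := n+1) R) ⊆
        closedBall (0 : EuclideanSpace ℝ (Fin (n+1))) (2*R) :=
      closure_minimal hsuppη Metric.isClosed_closedBall
    have hηzero : ∀ x : EuclideanSpace ℝ (Fin (n+1)),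
        x ∉ closedBall (0 : EuclideanSpace ℝ (Fin (n+1))) (2*R) → cutoff R x = 0 :=
      fun x hx => image_eq_zero_of_notMem_tsupport (fun h => hx (htsupp h))
    have hηfzero : ∀ x : EuclideanSpace ℝ (Fin (n+1)),
        x ∉ closedBall (0 : EuclideanSpace ℝ (Fin (n+1))) (2*R) →
        fderiv ℝ (cutoff (m := n+1) R) x = 0 := by
      intro x hx
      by_contra h
      exact hx (htsupp (support_fderiv_subset ℝ (Function.mem_support.mpr h)))
    set φ : EuclideanSpace ℝ (Fin (n+1)) → ℝ := fun y => u y * (cutoff R y * cutoff R y) with hφ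
    have hφ2 : ContDiff ℝ 2 φ := (hu.of_le (by norm_num)).mul
      ((cutoff_contDiff hR 2).mul (cutoff_contDiff hR 2))
    have hφc : HasCompactSupport φ := by
      apply HasCompactSupport.intro (isCompact_closedBall
        (0 : EuclideanSpace ℝ (Fin (n+1))) (2*R))
      intro x hx
      simp [hφ, hηzero x hx]
    have G0 := green0 u φ hu hφ2 hφc
    set g1 : EuclideanSpace ℝ (Fin (n+1)) → ℝ :=
      fun x => (cutoff R x)^2 * ‖gradient u x‖^2 with hg1
    set g2 : EuclideanSpace ℝ (Fin (n+1)) → ℝ :=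
      fun x => 2*u x*cutoff R x * (fderiv ℝ (cutoff (m := n+1) R) x (gradient u x)) with hg2
    set g3 : EuclideanSpace ℝ (Fin (n+1)) → ℝ :=
      fun x => (cutoff R x)^2 * (u x * u x ^ p) with hg3
    set g4 : EuclideanSpace ℝ (Fin (n+1)) → ℝ :=
      fun x => 2*(u x)^2*‖fderiv ℝ (cutoff (m := n+1) R) x‖^2 with hg4
    have hud : ∀ x, HasFDerivAt u (fderiv ℝ u x) x :=
      fun x => (hu.differentiable (by norm_num) x).hasFDerivAt
    have hηd : ∀ x, HasFDerivAt (cutoff (m := n+1) R) (fderiv ℝ (cutoff (m := n+1) R) x) x :=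
      fun x => (hη3.differentiable (by norm_num) x).hasFDerivAt
    have hpt : ∀ x, ((∑ i, fderiv ℝ φ x (EuclideanSpace.single i 1) *
        fderiv ℝ u x (EuclideanSpace.single i 1)) + φ x * lap u x)
        = g1 x + g2 x - g3 x := by
      intro x
      have h3 := (hηd x).mul (hηd x)
      have h4 := (hud x).mul h3
      have hfdφ : fderiv ℝ φ x = (u x) •
          (cutoff R x • fderiv ℝ (cutoff (m := n+1) R) x +
           cutoff R x • fderiv ℝ (cutoff (m := n+1) R) x) +
          (cutoff R x * cutoff R x) • fderiv ℝ u x := h4.fderiv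
      have hS : (∑ i, fderiv ℝ φ x (EuclideanSpace.single i 1) *
          fderiv ℝ u x (EuclideanSpace.single i 1)) = g1 x + g2 x := by
        rw [sum_fderiv_mul, hfdφ]
        simp only [ContinuousLinearMap.add_apply, ContinuousLinearMap.smul_apply,
          smul_eq_mul]
        rw [← inner_gradient u x (gradient u x), real_inner_self_eq_norm_sq]
        simp only [hg1, hg2]
        ring
      have hl : lap u x = -(u x ^ p) := by have := heq x; linarith
      rw [hS, hl]
      simp only [hφ, hg3]
      ring
    have G0' : ∫ x, (g1 x + g2 x - g3 x) = 0 := by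
      rw [integral_congr_ae (Filter.Eventually.of_forall (fun x => (hpt x).symm))]
      exact G0
    have Ig1' : Integrable g1 volume := Ig1 R hR
    have Ig2 : Integrable g2 volume := by
      apply Continuous.integrable_of_hasCompactSupport
        (((continuous_const.mul hucont).mul hηcont).mul (hηfc.clm_apply hgradc))
      apply HasCompactSupport.intro (isCompact_closedBall
        (0 : EuclideanSpace ℝ (Fin (n+1))) (2*R))
      intro x hx
      simp [hg2, hηzero x hx]
    have Ig3 : Integrable g3 volume := by
      apply Continuous.integrable_of_hasCompactSupport
        ((hηcont.pow 2).mul (hucont.mul (hucont.rpow_const (fun x => Or.inl (hupos x).ne'))))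
      apply HasCompactSupport.intro (isCompact_closedBall
        (0 : EuclideanSpace ℝ (Fin (n+1))) (2*R))
      intro x hx
      simp [hg3, hηzero x hx]
    have Ig4 : Integrable g4 volume := by
      apply Continuous.integrable_of_hasCompactSupport
        ((continuous_const.mul (hucont.pow 2)).mul ((hηfc.norm).pow 2))
      apply HasCompactSupport.intro (isCompact_closedBall
        (0 : EuclideanSpace ℝ (Fin (n+1))) (2*R))
      intro x hx
      simp [hg4, hηfzero x hx]
    have e1 : ∫ x, g1 x = (∫ x, g3 x) - ∫ x, g2 x := by
      have hIadd : Integrable (fun x => g1 x + g2 x) volume := Ig1'.add Ig2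
      have h8 : (∫ x, (g1 x + g2 x)) - ∫ x, g3 x = 0 := by
        rw [← integral_sub hIadd Ig3]
        exact G0'
      rw [integral_add Ig1' Ig2] at h8
      linarith
    have e2 : ∫ x, g3 x ≤ I := by
      apply integral_mono Ig3 hint
      intro x
      simp only [hg3]
      rw [hq x]
      have h1 : (cutoff R x)^2 ≤ 1 :=
        pow_le_one₀ (cutoff_nonneg R x) (cutoff_le_one R x)
      nlinarith [Real.rpow_nonneg (hupos x).le q, pow_nonneg (cutoff_nonneg R x) 2]
    have habs : ∀ x, |g2 x| ≤ g4 x + (1/2) * g1 x := by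
      intro x
      have hT : |fderiv ℝ (cutoff (m := n+1) R) x (gradient u x)| ≤
          ‖fderiv ℝ (cutoff (m := n+1) R) x‖ * ‖gradient u x‖ := by
        rw [← Real.norm_eq_abs]
        exact (fderiv ℝ (cutoff (m := n+1) R) x).le_opNorm _
      have h5 : |g2 x| ≤ 2*u x*cutoff R x *
          (‖fderiv ℝ (cutoff (m := n+1) R) x‖ * ‖gradient u x‖) := by
        simp only [hg2]
        have hnn : (0:ℝ) ≤ 2*u x*cutoff R x :=
          mul_nonneg (mul_nonneg (by norm_num) (hupos x).le) (cutoff_nonneg R x)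
        rw [abs_mul, abs_of_nonneg hnn]
        exact mul_le_mul_of_nonneg_left hT hnn
      simp only [hg4, hg1]
      have hη01 := cutoff_nonneg R x
      have hη11 := cutoff_le_one R x
      nlinarith [sq_nonneg (2*(u x*‖fderiv ℝ (cutoff (m := n+1) R) x‖) -
        cutoff R x*‖gradient u x‖), (hupos x).le, norm_nonneg (fderiv ℝ (cutoff (m := n+1) R) x),
        norm_nonneg (gradient u x),
        mul_nonneg (mul_nonneg (hupos x).le hη01) (mul_nonneg (norm_nonneg
          (fderiv ℝ (cutoff (m := n+1) R) x)) (norm_nonneg (gradient u x)))]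
    have e3 : -(∫ x, g2 x) ≤ ∫ x, (g4 x + (1/2) * g1 x) := by
      calc -(∫ x, g2 x) ≤ |∫ x, g2 x| := neg_le_abs _
      _ ≤ ∫ x, |g2 x| := by
          rw [← Real.norm_eq_abs]
          refine (norm_integral_le_integral_norm g2).trans_eq ?_
          simp [Real.norm_eq_abs]
      _ ≤ ∫ x, (g4 x + (1/2) * g1 x) :=
          integral_mono Ig2.abs (Ig4.add (Ig1'.const_mul _)) habs
    have e4 : ∫ x, (g4 x + (1/2) * g1 x) = (∫ x, g4 x) + (1/2) * ∫ x, g1 x := by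
      rw [integral_add Ig4 (Ig1'.const_mul _), integral_const_mul]
    have e5 : ∫ x, g4 x ≤ 2*C^2*K := by
      have hsub : ∫ x, g4 x =
          ∫ x in closedBall (0 : EuclideanSpace ℝ (Fin (n+1))) (2*R), g4 x :=
        (setIntegral_eq_integral_of_forall_compl_eq_zero
          (fun x hx => by simp [hg4, hηfzero x hx])).symm
      rw [hsub]
      have hIu2 : IntegrableOn (fun x => 2*(C/R)^2 * (u x)^2)
          (closedBall (0 : EuclideanSpace ℝ (Fin (n+1))) (2*R)) volume :=
        (((hucont.pow 2).continuousOn.integrableOn_compact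
          (isCompact_closedBall _ _)).const_mul _)
      calc ∫ x in closedBall (0 : EuclideanSpace ℝ (Fin (n+1))) (2*R), g4 x
          ≤ ∫ x in closedBall (0 : EuclideanSpace ℝ (Fin (n+1))) (2*R), 2*(C/R)^2 * (u x)^2 := by
            apply setIntegral_mono_on Ig4.integrableOn hIu2 measurableSet_closedBall
            intro x _
            simp only [hg4]
            have h6 := hCb (n+1) R hR x
            have h7 : ‖fderiv ℝ (cutoff (m := n+1) R) x‖^2 ≤ (C/R)^2 :=
              pow_le_pow_left₀ (norm_nonneg _) h6 2
            nlinarith [sq_nonneg (u x)]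
      _ = 2*(C/R)^2 * ∫ x in closedBall (0 : EuclideanSpace ℝ (Fin (n+1))) (2*R), (u x)^2 :=
          integral_const_mul _ _
      _ ≤ 2*(C/R)^2 * (R^2*K) := by
          apply mul_le_mul_of_nonneg_left (hKb R hR) (by positivity)
      _ = 2*C^2*K := by field_simp
    simp only [hg1] at e1 e4 ⊢
    linarith
  -- monotone convergence over balls
  have hball : ∀ k : ℕ, ∫⁻ x in ball (0 : EuclideanSpace ℝ (Fin (n+1))) ((k:ℝ)+1),
      ENNReal.ofReal (‖gradient u x‖^2) ≤ ENNReal.ofReal Mb := by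
    intro k
    have hR : (0:ℝ) < (k:ℝ)+1 := by positivity
    calc ∫⁻ x in ball (0 : EuclideanSpace ℝ (Fin (n+1))) ((k:ℝ)+1),
        ENNReal.ofReal (‖gradient u x‖^2)
        ≤ ∫⁻ x, ENNReal.ofReal ((cutoff ((k:ℝ)+1) x)^2 * ‖gradient u x‖^2) := by
          rw [← lintegral_indicator measurableSet_ball]
          apply lintegral_mono
          intro x
          by_cases hx : x ∈ ball (0 : EuclideanSpace ℝ (Fin (n+1))) ((k:ℝ)+1)
          · rw [indicator_of_mem hx]
            simp [cutoff_eq_one hR (mem_ball_zero_iff.mp hx).le]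
          · rw [indicator_of_notMem hx]
            exact zero_le
    _ = ENNReal.ofReal (∫ x, (cutoff ((k:ℝ)+1) x)^2 * ‖gradient u x‖^2) :=
        (ofReal_integral_eq_lintegral_ofReal (Ig1 _ hR)
          (Filter.Eventually.of_forall (fun x => by positivity))).symm
    _ ≤ ENNReal.ofReal Mb := ENNReal.ofReal_le_ofReal (key _ hR)
  have hlim : ∫⁻ x, ENNReal.ofReal (‖gradient u x‖^2) ≤ ENNReal.ofReal Mb := by
    have hmeas : ∀ k : ℕ, Measurable ((ball (0 : EuclideanSpace ℝ (Fin (n+1))) ((k:ℝ)+1)).indicator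
        (fun x => ENNReal.ofReal (‖gradient u x‖^2))) :=
      fun k => (hGcont.measurable.ennreal_ofReal).indicator measurableSet_ball
    have hmono : Monotone (fun k : ℕ =>
        (ball (0 : EuclideanSpace ℝ (Fin (n+1))) ((k:ℝ)+1)).indicator
        (fun x => ENNReal.ofReal (‖gradient u x‖^2))) := by
      intro i j hij
      apply indicator_le_indicator_of_subset (ball_subset_ball (by
        have h9 : (i:ℝ) ≤ (j:ℝ) := Nat.cast_le.mpr hij
        linarith))
      exact fun _ => zero_le
    have hpt2 : ∀ x, ENNReal.ofReal (‖gradient u x‖^2) =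
        ⨆ k : ℕ, (ball (0 : EuclideanSpace ℝ (Fin (n+1))) ((k:ℝ)+1)).indicator
          (fun y => ENNReal.ofReal (‖gradient u y‖^2)) x := by
      intro x
      obtain ⟨k, hk⟩ := exists_nat_ge ‖x‖
      apply le_antisymm
      · apply le_iSup_of_le k
        rw [indicator_of_mem (mem_ball_zero_iff.mpr (by linarith))]
      · exact iSup_le (fun k => indicator_le_self _ _ x)
    calc ∫⁻ x, ENNReal.ofReal (‖gradient u x‖^2)
        = ∫⁻ x, ⨆ k : ℕ, (ball (0 : EuclideanSpace ℝ (Fin (n+1))) ((k:ℝ)+1)).indicator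
          (fun y => ENNReal.ofReal (‖gradient u y‖^2)) x := lintegral_congr hpt2
    _ = ⨆ k : ℕ, ∫⁻ x, (ball (0 : EuclideanSpace ℝ (Fin (n+1))) ((k:ℝ)+1)).indicator
          (fun y => ENNReal.ofReal (‖gradient u y‖^2)) x := lintegral_iSup hmeas hmono
    _ ≤ ENNReal.ofReal Mb := by
        apply iSup_le
        intro k
        rw [lintegral_indicator measurableSet_ball]
        exact hball k
  refine ⟨hGcont.aestronglyMeasurable, ?_⟩
  rw [hasFiniteIntegral_iff_ofReal (Filter.Eventually.of_forall (fun x => by positivity))]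
  exact lt_of_le_of_lt hlim ENNReal.ofReal_lt_top
end
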